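/- arXiv:2206.10204 — 3 statements merged into one kernel-verified Lean document; each statement's English description precedes it below -/
import Mathlib

section
/- Let d ≥ 1 and let S ⊂ ℝᵈ be a measurable set satisfying the Geometric Control Condition. Then S is thick. -/
open MeasureTheory

/-- `S ⊆ ℝᵈ` satisfies the Geometric Control Condition if there are `δ, L > 0` such
that every straight line segment of length `L` meets `S` in one-dimensional measure
at least `δ`. -/
def SatisfiesGCC {d : ℕ} (S : Set (EuclideanSpace ℝ (Fin d))) : Prop :=
  ∃ δ > (0 : ℝ), ∃ L > (0 : ℝ), ∀ (x v : EuclideanSpace ℝ (Fin d)), ‖v‖ = 1 →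
    ENNReal.ofReal δ ≤ volume {t : ℝ | t ∈ Set.Icc (0 : ℝ) L ∧ x + t • v ∈ S}

/-- A set `S ⊆ ℝᵈ` is thick if there are `γ, ρ > 0` such that
`vol (S ∩ B_ρ(x)) ≥ γ` for all `x`. -/
def IsThick {d : ℕ} (S : Set (EuclideanSpace ℝ (Fin d))) : Prop :=
  ∃ γ > (0 : ℝ), ∃ ρ > (0 : ℝ), ∀ x : EuclideanSpace ℝ (Fin d),
    ENNReal.ofReal γ ≤ volume (S ∩ Metric.ball x ρ)

theorem stmt3 (d : ℕ) (hd : 1 ≤ d) (S : Set (EuclideanSpace ℝ (Fin d)))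
    (hS : MeasurableSet S) (hGCC : SatisfiesGCC S) : IsThick S := by
  obtain ⟨n, rfl⟩ : ∃ n, d = n + 1 := ⟨d - 1, by omega⟩
  obtain ⟨δ, hδ, L, hL, hGCC⟩ := hGCC
  refine ⟨δ, hδ, (n + 2) * (L + 1), by positivity, fun x => ?_⟩
  set e := (MeasurableEquiv.toLp 2 (Fin (n + 1) → ℝ)).symm with he_def
  set f := MeasurableEquiv.piFinSuccAbove (fun _ : Fin (n + 1) => ℝ) 0 with hf_def
  have hmp : MeasurePreserving (⇑f ∘ ⇑e) volume
      ((volume : Measure ℝ).prod (Measure.pi fun _ : Fin n => (volume : Measure ℝ))) := by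
    have h1 := EuclideanSpace.volume_preserving_symm_measurableEquiv_toLp (Fin (n + 1))
    have h2 := measurePreserving_piFinSuccAbove (fun _ : Fin (n + 1) => (volume : Measure ℝ)) 0
    have hv : (volume : Measure (Fin (n+1) → ℝ)) = Measure.pi fun _ => volume := volume_pi
    rw [hv] at h1
    exact h2.comp h1
  set B : Set (ℝ × (Fin n → ℝ)) :=
    {p | e.symm (f.symm p) ∈ S ∧ p.1 ∈ Set.Icc (x 0) (x 0 + L) ∧
      ∀ j : Fin n, p.2 j ∈ Set.Ioo (x (Fin.succ j)) (x (Fin.succ j) + 1)} with hB_def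
  have hBmeas : MeasurableSet B := by
    refine MeasurableSet.inter ?_ (MeasurableSet.inter ?_ ?_)
    · exact (e.symm.measurable.comp f.symm.measurable).comp measurable_id hS
    · exact measurable_fst measurableSet_Icc
    · show MeasurableSet {p : ℝ × (Fin n → ℝ) |
        ∀ j : Fin n, p.2 j ∈ Set.Ioo (x (Fin.succ j)) (x (Fin.succ j) + 1)}
      rw [show {p : ℝ × (Fin n → ℝ) | ∀ j : Fin n, p.2 j ∈ Set.Ioo (x (Fin.succ j)) (x (Fin.succ j) + 1)}
        = Prod.snd ⁻¹' (Set.univ.pi fun j => Set.Ioo (x (Fin.succ j)) (x (Fin.succ j) + 1)) by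
          ext p; simp [Set.mem_pi]]
      exact measurable_snd (MeasurableSet.univ_pi fun j => measurableSet_Ioo)
  -- the preimage of B is contained in S ∩ ball x ρ
  have hsub : (⇑f ∘ ⇑e) ⁻¹' B ⊆ S ∩ Metric.ball x ((n + 2) * (L + 1)) := by
    rintro z ⟨hz1, hz2, hz3⟩
    have hzS : z ∈ S := by simpa using hz1
    refine ⟨hzS, ?_⟩
    have hz2' : z 0 ∈ Set.Icc (x 0) (x 0 + L) := hz2
    have hz3' : ∀ j : Fin n, z (Fin.succ j) ∈ Set.Ioo (x (Fin.succ j)) (x (Fin.succ j) + 1) := hz3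
    clear hz2 hz3
    rename' hz2' => hz2, hz3' => hz3
    rw [Metric.mem_ball, EuclideanSpace.dist_eq]
    have hbound : ∀ i : Fin (n+1), dist (z i) (x i) ^ 2 ≤ (L + 1) ^ 2 := by
      intro i
      induction i using Fin.cases with
      | zero =>
        have h1 : |z 0 - x 0| ≤ L + 1 := by
          rw [abs_le]; constructor <;> [nlinarith [hz2.1, hz2.2]; nlinarith [hz2.1, hz2.2]]
        calc dist (z 0) (x 0) ^ 2 = |z 0 - x 0| ^ 2 := by rw [Real.dist_eq, sq_abs]
          _ ≤ (L + 1) ^ 2 := by nlinarith [abs_nonneg (z 0 - x 0)]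
      | succ j =>
        have := hz3 j
        have h1 : |z (Fin.succ j) - x (Fin.succ j)| ≤ L + 1 := by
          rw [abs_le]; constructor <;> nlinarith [this.1, this.2]
        calc dist (z (Fin.succ j)) (x (Fin.succ j)) ^ 2
            = |z (Fin.succ j) - x (Fin.succ j)| ^ 2 := by rw [Real.dist_eq, sq_abs]
          _ ≤ (L + 1) ^ 2 := by nlinarith [abs_nonneg (z (Fin.succ j) - x (Fin.succ j))]
    have hsum : ∑ i : Fin (n+1), dist (z i) (x i) ^ 2 ≤ (n + 1) * (L + 1) ^ 2 := by
      calc ∑ i : Fin (n+1), dist (z i) (x i) ^ 2 ≤ ∑ _i : Fin (n+1), (L + 1) ^ 2 :=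
            Finset.sum_le_sum fun i _ => hbound i
        _ = (n + 1) * (L + 1) ^ 2 := by
            rw [Finset.sum_const, Finset.card_univ, Fintype.card_fin]; ring
    rw [Real.sqrt_lt' (by positivity)]
    calc ∑ i : Fin (n+1), dist (z i) (x i) ^ 2 ≤ (n + 1) * (L + 1) ^ 2 := hsum
      _ < ((n + 2) * (L + 1)) ^ 2 := by nlinarith [hL, sq_nonneg (L+1), (by positivity : (0:ℝ) < (L+1)^2)]
  -- slice lower bound
  set box : Set (Fin n → ℝ) :=
    Set.univ.pi fun j => Set.Ioo (x (Fin.succ j)) (x (Fin.succ j) + 1) with hbox_def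
  have hslice : ∀ y ∈ box, ENNReal.ofReal δ ≤ volume ((fun t => (t, y)) ⁻¹' B) := by
    intro y hy
    set x' : EuclideanSpace ℝ (Fin (n+1)) := e.symm (f.symm (x 0, y)) with hx'_def
    set v : EuclideanSpace ℝ (Fin (n+1)) := EuclideanSpace.single 0 1 with hv_def
    have hvnorm : ‖v‖ = 1 := by simp [hv_def]
    have hpt : ∀ s : ℝ, e.symm (f.symm (x 0 + s, y)) = x' + s • v := by
      intro s
      refine PiLp.ext fun i => ?_
      have hL2 : (x' + s • v) i = x' i + s * v i := by simp
      rw [hL2]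
      induction i using Fin.cases with
      | zero =>
        show Fin.insertNth (α := fun _ : Fin (n+1) => ℝ) 0 (x 0 + s) y 0
            = Fin.insertNth (α := fun _ : Fin (n+1) => ℝ) 0 (x 0) y 0 + s * v 0
        rw [Fin.insertNth_apply_same, Fin.insertNth_apply_same]
        simp [hv_def, EuclideanSpace.single_apply]
      | succ j =>
        show Fin.insertNth (α := fun _ : Fin (n+1) => ℝ) 0 (x 0 + s) y (Fin.succ j)
            = Fin.insertNth (α := fun _ : Fin (n+1) => ℝ) 0 (x 0) y (Fin.succ j) + s * v (Fin.succ j)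
        rw [← Fin.zero_succAbove j, Fin.insertNth_apply_succAbove, Fin.insertNth_apply_succAbove]
        simp [hv_def, EuclideanSpace.single_apply, Fin.succ_ne_zero]
    have hset : (fun t => (t, y)) ⁻¹' B
        = (fun t : ℝ => t + -(x 0)) ⁻¹' {s : ℝ | s ∈ Set.Icc (0:ℝ) L ∧ x' + s • v ∈ S} := by
      ext t
      simp only [Set.mem_preimage, hB_def, Set.mem_setOf_eq, Set.mem_Icc]
      have hkey : e.symm (f.symm (t, y)) = x' + (t + -(x 0)) • v := by
        have h := hpt (t - x 0)
        rw [show x 0 + (t - x 0) = t by ring] at h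
        rw [show t + -(x 0) = t - x 0 by ring]
        exact h
      constructor
      · rintro ⟨h1, h2, -⟩
        exact ⟨⟨by linarith [h2.1], by linarith [h2.2]⟩, by rw [← hkey]; exact h1⟩
      · rintro ⟨⟨h1, h2⟩, h3⟩
        exact ⟨by rw [hkey]; exact h3, ⟨by linarith, by linarith⟩, fun j => hy j (Set.mem_univ j)⟩
    rw [hset, measure_preimage_add_right volume (-(x 0)) _]
    exact hGCC x' v hvnorm
  -- box has measure 1
  have hboxmeas : MeasurableSet box := MeasurableSet.univ_pi fun j => measurableSet_Ioo
  have hboxvol : (Measure.pi fun _ : Fin n => (volume : Measure ℝ)) box = 1 := by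
    rw [hbox_def, Measure.pi_pi]
    simp [Real.volume_Ioo]
  -- put everything together
  have key : ENNReal.ofReal δ ≤ volume ((⇑f ∘ ⇑e) ⁻¹' B) := by
    rw [hmp.measure_preimage hBmeas.nullMeasurableSet]
    rw [Measure.prod_apply_symm hBmeas]
    calc ENNReal.ofReal δ
        = ENNReal.ofReal δ * (Measure.pi fun _ : Fin n => (volume : Measure ℝ)) box := by
          rw [hboxvol, mul_one]
      _ = ∫⁻ y in box, ENNReal.ofReal δ ∂(Measure.pi fun _ : Fin n => (volume : Measure ℝ)) :=
          (setLIntegral_const _ _).symm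
      _ ≤ ∫⁻ y in box, volume ((fun t => (t, y)) ⁻¹' B)
            ∂(Measure.pi fun _ : Fin n => (volume : Measure ℝ)) :=
          setLIntegral_mono' hboxmeas hslice
      _ ≤ ∫⁻ y, volume ((fun t => (t, y)) ⁻¹' B)
            ∂(Measure.pi fun _ : Fin n => (volume : Measure ℝ)) :=
          setLIntegral_le_lintegral _ _
  exact key.trans (measure_mono hsub)
end

section
/- Let n ≥ 1. There is a constant c > 0, depending only on n, such that for every δ > 0 there is a constant C̃ > 0, depending only on n and δ, with the following property: for every R ≥ c/δ, every set Γ ⊂ ℝⁿ with gap(Γ) ≥ δ, and every finitely supported family of complex coefficients (α_γ)_{γ ∈ Γ}, one has ∫_{B_R(0)} |Σ_{γ ∈ Γ} α_γ · exp(i⟨γ, x⟩)|² dx ≥ C̃ · Σ_{γ ∈ Γ} |α_γ|². -/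
open MeasureTheory

/-- The gap of a set `X`: the infimum of distances between distinct points of `X`
(`∞` if `X` has at most one element). -/
noncomputable def setGap {n : ℕ} (X : Set (EuclideanSpace ℝ (Fin n))) : ENNReal :=
  ⨅ (x : X) (y : X) (_ : x ≠ y), edist (x : EuclideanSpace ℝ (Fin n)) y



lemma sum_icc_one_div_sq (N : ℕ) :
    ∑ k ∈ Finset.Icc 1 N, (1:ℝ)/(k:ℝ)^2 ≤ 2 - 2/(N+1) := by
  induction N with
  | zero => simp
  | succ N ih =>
    rw [Finset.sum_Icc_succ_top (by omega : 1 ≤ N + 1)]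
    have h1 : (0:ℝ) < N + 1 := by positivity
    have h2 : (0:ℝ) < N + 1 + 1 := by positivity
    have key : (1:ℝ)/((N:ℝ)+1)^2 ≤ 2/((N:ℝ)+1) - 2/((N:ℝ)+1+1) := by
      rw [div_sub_div _ _ (ne_of_gt h1) (ne_of_gt h2)]
      rw [div_le_div_iff₀ (by positivity) (by positivity)]
      nlinarith [sq_nonneg ((N:ℝ)+1)]
    push_cast
    push_cast at ih
    linarith

lemma sum_nat_one_div_sq (s : Finset ℕ) :
    ∑ k ∈ s, (if k = 0 then (0:ℝ) else 1/(k:ℝ)^2) ≤ 2 := by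
  classical
  set N := if h : s.Nonempty then s.max' h else 0 with hN
  have hsub : s ⊆ Finset.range (N+1) := by
    intro k hk
    simp only [Finset.mem_range]
    have : s.Nonempty := ⟨k, hk⟩
    rw [hN, dif_pos this]
    exact Nat.lt_succ_of_le (s.le_max' k hk)
  calc ∑ k ∈ s, (if k = 0 then (0:ℝ) else 1/(k:ℝ)^2)
      ≤ ∑ k ∈ Finset.range (N+1), (if k = 0 then (0:ℝ) else 1/(k:ℝ)^2) := by
        apply Finset.sum_le_sum_of_subset_of_nonneg hsub
        intro i _ _; positivity
    _ = ∑ k ∈ Finset.Icc 1 N, (if k = 0 then (0:ℝ) else 1/(k:ℝ)^2) := by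
        refine (Finset.sum_subset (fun x hx => ?_) (fun x hx hnx => ?_)).symm
        · simp only [Finset.mem_Icc] at hx; simp only [Finset.mem_range]; omega
        · simp only [Finset.mem_range] at hx; simp only [Finset.mem_Icc] at hnx
          have : x = 0 := by omega
          simp [this]
    _ = ∑ k ∈ Finset.Icc 1 N, (1:ℝ)/(k:ℝ)^2 := by
        apply Finset.sum_congr rfl; intro k hk
        rw [if_neg]; simp at hk; omega
    _ ≤ 2 - 2/(N+1) := sum_icc_one_div_sq N
    _ ≤ 2 := by
        have : (0:ℝ) ≤ 2/((N:ℝ)+1) := by positivity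
        linarith

lemma sum_int_one_div_sq (B : Finset ℤ) :
    ∑ m ∈ B, (if m = 0 then (0:ℝ) else 1/(m:ℝ)^2) ≤ 4 := by
  classical
  have key : ∀ (C : Finset ℤ), (∀ m ∈ C, ∀ m' ∈ C, m.natAbs = m'.natAbs → m = m') →
      ∑ m ∈ C, (if m = 0 then (0:ℝ) else 1/(m:ℝ)^2) ≤ 2 := by
    intro C hinj
    have := sum_nat_one_div_sq (C.image Int.natAbs)
    rw [Finset.sum_image (by exact fun x hx y hy h => hinj x hx y hy h)] at this
    calc ∑ m ∈ C, (if m = 0 then (0:ℝ) else 1/(m:ℝ)^2)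
        = ∑ m ∈ C, (if m.natAbs = 0 then (0:ℝ) else 1/(m.natAbs:ℝ)^2) := by
          apply Finset.sum_congr rfl; intro m _
          rcases eq_or_ne m 0 with rfl | hm
          · simp
          · rw [if_neg hm, if_neg (by simpa using hm)]
            congr 1
            rw [Nat.cast_natAbs, Int.cast_abs, sq_abs]
      _ ≤ 2 := this
  have hsplit : B = B.filter (0 ≤ ·) ∪ B.filter (· < 0) := by
    ext m
    simp only [Finset.mem_union, Finset.mem_filter]
    rcases le_or_gt 0 m with h|h
    · simp [h]
    · simp [h, not_le.mpr h]
  rw [hsplit, Finset.sum_union (by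
    rw [Finset.disjoint_filter]; intro m _ h; omega)]
  have h1 := key (B.filter (0 ≤ ·)) (by
    intro m hm m' hm' h
    simp only [Finset.mem_filter] at hm hm'
    omega)
  have h2 := key (B.filter (· < 0)) (by
    intro m hm m' hm' h
    simp only [Finset.mem_filter] at hm hm'
    omega)
  linarith

open MeasureTheory

noncomputable def psiF (a t : ℝ) : ℝ := max (2*a - |t|) 0

noncomputable def Hfun (a ξ : ℝ) : ℝ :=
  if ξ = 0 then 4*a^2 else 2*(1 - Real.cos (2*a*ξ))/ξ^2

lemma psiF_nonneg (a t : ℝ) : 0 ≤ psiF a t := le_max_right _ _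

lemma psiF_le (a : ℝ) (ha : 0 ≤ a) (t : ℝ) : psiF a t ≤ 2*a := by
  unfold psiF
  rw [max_le_iff]
  constructor
  · have := abs_nonneg t; linarith
  · linarith

lemma psiF_eq_zero {a t : ℝ} (h : 2*a ≤ |t|) : psiF a t = 0 := by
  unfold psiF
  rw [max_eq_right]; linarith

lemma continuous_psiF (a : ℝ) : Continuous (psiF a) :=
  (continuous_const.sub (_root_.continuous_abs)).max continuous_const

lemma Hfun_nonneg (a ξ : ℝ) : 0 ≤ Hfun a ξ := by
  unfold Hfun
  split_ifs with h
  · positivity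
  · have h1 : Real.cos (2*a*ξ) ≤ 1 := Real.cos_le_one _
    have h2 : (0:ℝ) < ξ^2 := by positivity
    apply div_nonneg (by linarith) (le_of_lt h2)

lemma Hfun_even (a ξ : ℝ) : Hfun a (-ξ) = Hfun a ξ := by
  unfold Hfun
  rcases eq_or_ne ξ 0 with rfl | h
  · simp
  · rw [if_neg (by simpa using h), if_neg h]
    rw [show 2*a*(-ξ) = -(2*a*ξ) by ring, Real.cos_neg, neg_pow]
    ring

lemma Hfun_le_sq (a : ℝ) (ha : 0 ≤ a) (ξ : ℝ) : Hfun a ξ ≤ 4*a^2 := by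
  unfold Hfun
  split_ifs with h
  · exact le_refl _
  · have hc : Real.cos (2*a*ξ) = 1 - 2*Real.sin (a*ξ)^2 := by
      rw [show 2*a*ξ = 2*(a*ξ) by ring, Real.cos_two_mul, Real.cos_sq']
      ring
    rw [hc]
    have hsin : Real.sin (a*ξ)^2 ≤ (a*ξ)^2 := Real.sin_sq_le_sq
    have h2 : (0:ℝ) < ξ^2 := by positivity
    rw [div_le_iff₀ h2]
    nlinarith

lemma Hfun_le_inv (a : ℝ) {ξ : ℝ} (h : ξ ≠ 0) : Hfun a ξ ≤ 4/ξ^2 := by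
  unfold Hfun
  rw [if_neg h]
  have h1 : -1 ≤ Real.cos (2*a*ξ) := Real.neg_one_le_cos _
  have h2 : (0:ℝ) < ξ^2 := by positivity
  rw [div_le_div_iff_of_pos_right h2]
  linarith

lemma integrable_psiF_mul (a : ℝ) (ha : 0 ≤ a) (b : ℝ) :
    Integrable (fun t : ℝ => (psiF a t : ℂ) * Complex.exp (b * t * Complex.I)) := by
  apply Continuous.integrable_of_hasCompactSupport
  · exact (Complex.continuous_ofReal.comp (continuous_psiF a)).mul
      (Complex.continuous_exp.comp (by continuity))
  · apply HasCompactSupport.intro (isCompact_Icc (a := -(2*a)) (b := 2*a))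
    intro t ht
    simp only [Set.mem_Icc, not_and_or, not_le] at ht
    have habs : 2*a ≤ |t| := by
      rcases ht with h|h
      · rw [abs_of_nonpos (by linarith)]; linarith
      · rw [abs_of_pos (by linarith)]; linarith
    rw [psiF_eq_zero habs]
    simp

lemma integral_psiF_mul (a : ℝ) (ha : 0 < a) (b : ℝ) :
    ∫ t : ℝ, (psiF a t : ℂ) * Complex.exp (b * t * Complex.I) = ((Hfun a b : ℝ) : ℂ) := by
  have h2a : -(2*a) ≤ (2*a : ℝ) := by linarith
  have hcont : Continuous fun t : ℝ => (psiF a t : ℂ) * Complex.exp (b*t*Complex.I) :=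
    (Complex.continuous_ofReal.comp (continuous_psiF a)).mul
      (Complex.continuous_exp.comp (by continuity))
  have hIoc : ∀ t ∉ Set.Ioc (-(2*a)) (2*a), (psiF a t : ℂ) * Complex.exp (b*t*Complex.I) = 0 := by
    intro t ht
    simp only [Set.mem_Ioc, not_and_or, not_lt, not_le] at ht
    have habs : 2*a ≤ |t| := by
      rcases ht with h|h
      · rw [abs_of_nonpos (by linarith)]; linarith
      · rw [abs_of_pos (by linarith)]; linarith
    rw [psiF_eq_zero habs]
    simp
  rw [← MeasureTheory.setIntegral_eq_integral_of_forall_compl_eq_zero hIoc]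
  rw [← intervalIntegral.integral_of_le h2a]
  rw [← intervalIntegral.integral_add_adjacent_intervals (a := -(2*a)) (b := 0) (c := 2*a)
      (hcont.intervalIntegrable _ _) (hcont.intervalIntegrable _ _)]
  have e1 : (∫ t in (-(2*a))..0, (psiF a t : ℂ) * Complex.exp (b*t*Complex.I))
      = ∫ t in (-(2*a))..0, (((2*a:ℝ):ℂ) + (t:ℂ)) * Complex.exp (b*t*Complex.I) := by
    apply intervalIntegral.integral_congr
    intro t ht
    rw [Set.uIcc_of_le (by linarith : -(2*a) ≤ (0:ℝ))] at ht
    obtain ⟨h1, h2⟩ := ht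
    have hpsi : psiF a t = 2*a + t := by
      unfold psiF
      rw [abs_of_nonpos h2, max_eq_left (by linarith)]
      ring
    simp only [hpsi]
    push_cast
    ring
  have e2 : (∫ t in (0:ℝ)..(2*a), (psiF a t : ℂ) * Complex.exp (b*t*Complex.I))
      = ∫ t in (0:ℝ)..(2*a), (((2*a:ℝ):ℂ) - (t:ℂ)) * Complex.exp (b*t*Complex.I) := by
    apply intervalIntegral.integral_congr
    intro t ht
    rw [Set.uIcc_of_le (by linarith : (0:ℝ) ≤ 2*a)] at ht
    obtain ⟨h1, h2⟩ := ht
    have hpsi : psiF a t = 2*a - t := by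
      unfold psiF
      rw [abs_of_nonneg h1, max_eq_left (by linarith)]
    simp only [hpsi]
    push_cast
    ring
  rw [e1, e2]
  rcases eq_or_ne b 0 with rfl | hb
  · simp only [Complex.ofReal_zero, zero_mul, Complex.exp_zero, mul_one]
    have hd1 : ∀ z : ℂ, HasDerivAt (fun z : ℂ => ((2*a:ℝ):ℂ)*z + z^2/2) (((2*a:ℝ):ℂ) + z) z := by
      intro z
      have h := (((hasDerivAt_id z).const_mul ((2*a:ℝ):ℂ))).add ((hasDerivAt_pow 2 z).div_const 2)
      refine h.congr_deriv ?_
      simp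
    have hd2 : ∀ z : ℂ, HasDerivAt (fun z : ℂ => ((2*a:ℝ):ℂ)*z - z^2/2) (((2*a:ℝ):ℂ) - z) z := by
      intro z
      have h := (((hasDerivAt_id z).const_mul ((2*a:ℝ):ℂ))).sub ((hasDerivAt_pow 2 z).div_const 2)
      refine h.congr_deriv ?_
      simp
    have F1 := intervalIntegral.integral_eq_sub_of_hasDerivAt
      (a := -(2*a)) (b := (0:ℝ))
      (f := fun t : ℝ => ((2*a:ℝ):ℂ)*(t:ℂ) + (t:ℂ)^2/2)
      (f' := fun t : ℝ => ((2*a:ℝ):ℂ) + (t:ℂ))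
      (fun t _ => (hd1 (t:ℂ)).comp_ofReal)
      (by apply Continuous.intervalIntegrable; continuity)
    have F2 := intervalIntegral.integral_eq_sub_of_hasDerivAt
      (a := (0:ℝ)) (b := 2*a)
      (f := fun t : ℝ => ((2*a:ℝ):ℂ)*(t:ℂ) - (t:ℂ)^2/2)
      (f' := fun t : ℝ => ((2*a:ℝ):ℂ) - (t:ℂ))
      (fun t _ => (hd2 (t:ℂ)).comp_ofReal)
      (by apply Continuous.intervalIntegrable; continuity)
    rw [F1, F2]
    unfold Hfun
    rw [if_pos rfl]
    push_cast
    ring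
  · set c : ℂ := (b:ℂ) * Complex.I with hc
    have hcne : c ≠ 0 := mul_ne_zero (Complex.ofReal_ne_zero.mpr hb) Complex.I_ne_zero
    have hrw : ∀ t : ℝ, (b:ℂ)*t*Complex.I = c*t := fun t => by rw [hc]; ring
    simp_rw [hrw]
    have hderiv1 : ∀ (d : ℝ) (z : ℂ), HasDerivAt
        (fun z : ℂ => (((d:ℝ):ℂ) + z)/c * Complex.exp (c*z) - 1/c^2 * Complex.exp (c*z))
        ((((d:ℝ):ℂ) + z) * Complex.exp (c*z)) z := by
      intro d z
      have h1 : HasDerivAt (fun z : ℂ => (((d:ℝ):ℂ) + z)/c) (1/c) z := by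
        simpa using ((hasDerivAt_id z).const_add ((d:ℝ):ℂ)).div_const c
      have h2 : HasDerivAt (fun z : ℂ => Complex.exp (c*z)) (Complex.exp (c*z) * c) z := by
        simpa [Function.comp_def] using
          (Complex.hasDerivAt_exp (c*z)).comp z ((hasDerivAt_id z).const_mul c)
      have h3 : HasDerivAt (fun z : ℂ => 1/c^2 * Complex.exp (c*z))
          (1/c^2 * (Complex.exp (c*z) * c)) z := h2.const_mul _
      have := (h1.mul h2).sub h3
      refine this.congr_deriv ?_
      field_simp
      ring
    have hderiv2 : ∀ (d : ℝ) (z : ℂ), HasDerivAt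
        (fun z : ℂ => (((d:ℝ):ℂ) - z)/c * Complex.exp (c*z) + 1/c^2 * Complex.exp (c*z))
        ((((d:ℝ):ℂ) - z) * Complex.exp (c*z)) z := by
      intro d z
      have h1 : HasDerivAt (fun z : ℂ => (((d:ℝ):ℂ) - z)/c) (-1/c) z := by
        simpa using ((hasDerivAt_id z).const_sub ((d:ℝ):ℂ)).div_const c
      have h2 : HasDerivAt (fun z : ℂ => Complex.exp (c*z)) (Complex.exp (c*z) * c) z := by
        simpa [Function.comp_def] using
          (Complex.hasDerivAt_exp (c*z)).comp z ((hasDerivAt_id z).const_mul c)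
      have h3 : HasDerivAt (fun z : ℂ => 1/c^2 * Complex.exp (c*z))
          (1/c^2 * (Complex.exp (c*z) * c)) z := h2.const_mul _
      have := (h1.mul h2).add h3
      refine this.congr_deriv ?_
      field_simp
      ring
    have F1 := intervalIntegral.integral_eq_sub_of_hasDerivAt
      (a := -(2*a)) (b := (0:ℝ))
      (f := fun t : ℝ => (((2*a:ℝ):ℂ) + (t:ℂ))/c * Complex.exp (c*(t:ℂ))
              - 1/c^2 * Complex.exp (c*(t:ℂ)))
      (f' := fun t : ℝ => (((2*a:ℝ):ℂ) + (t:ℂ)) * Complex.exp (c*(t:ℂ)))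
      (fun t _ => (hderiv1 (2*a) (t:ℂ)).comp_ofReal)
      (Continuous.intervalIntegrable
        ((continuous_const.add Complex.continuous_ofReal).mul
          (Complex.continuous_exp.comp (continuous_const.mul Complex.continuous_ofReal))) _ _)
    have F2 := intervalIntegral.integral_eq_sub_of_hasDerivAt
      (a := (0:ℝ)) (b := 2*a)
      (f := fun t : ℝ => (((2*a:ℝ):ℂ) - (t:ℂ))/c * Complex.exp (c*(t:ℂ))
              + 1/c^2 * Complex.exp (c*(t:ℂ)))
      (f' := fun t : ℝ => (((2*a:ℝ):ℂ) - (t:ℂ)) * Complex.exp (c*(t:ℂ)))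
      (fun t _ => (hderiv2 (2*a) (t:ℂ)).comp_ofReal)
      (Continuous.intervalIntegrable
        ((continuous_const.sub Complex.continuous_ofReal).mul
          (Complex.continuous_exp.comp (continuous_const.mul Complex.continuous_ofReal))) _ _)
    rw [F1, F2]
    beta_reduce
    have hexp2 : Complex.exp (c*(((2*a):ℝ):ℂ)) =
        Complex.cos ((2*a*b:ℝ):ℂ) + Complex.sin ((2*a*b:ℝ):ℂ) * Complex.I := by
      rw [show c*(((2*a):ℝ):ℂ) = ((2*a*b:ℝ):ℂ) * Complex.I by rw [hc]; push_cast; ring]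
      exact Complex.exp_mul_I _
    have hexp1 : Complex.exp (c*((-(2*a):ℝ):ℂ)) =
        Complex.cos ((2*a*b:ℝ):ℂ) - Complex.sin ((2*a*b:ℝ):ℂ) * Complex.I := by
      rw [show c*((-(2*a):ℝ):ℂ) = (-((2*a*b:ℝ):ℂ)) * Complex.I by rw [hc]; push_cast; ring]
      rw [Complex.exp_mul_I, Complex.cos_neg, Complex.sin_neg]
      ring
    rw [hexp1, hexp2]
    unfold Hfun
    rw [if_neg hb]
    have hb' : ((b:ℝ):ℂ) ≠ 0 := Complex.ofReal_ne_zero.mpr hb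
    have hb2 : ((b:ℂ))^2 ≠ 0 := pow_ne_zero _ (Complex.ofReal_ne_zero.mpr hb)
    have hc2 : (1:ℂ)/c^2 = -(1/((b:ℂ)^2)) := by
      rw [hc, mul_pow, Complex.I_sq]
      field_simp
    push_cast
    rw [mul_zero, Complex.exp_zero, hc2]
    field_simp
    ring

noncomputable def wfun (n : ℕ) (a : ℝ) (x : EuclideanSpace ℝ (Fin n)) : ℝ :=
  ∏ j, psiF a (x j)

noncomputable def Wfun (n : ℕ) (a : ℝ) (ξ : EuclideanSpace ℝ (Fin n)) : ℝ :=
  ∏ j, Hfun a (ξ j)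

lemma wfun_nonneg (n : ℕ) (a : ℝ) (x : EuclideanSpace ℝ (Fin n)) : 0 ≤ wfun n a x :=
  Finset.prod_nonneg fun j _ => psiF_nonneg a (x j)

lemma wfun_le (n : ℕ) (a : ℝ) (ha : 0 ≤ a) (x : EuclideanSpace ℝ (Fin n)) :
    wfun n a x ≤ (2*a)^n := by
  calc wfun n a x ≤ ∏ _j : Fin n, (2*a) :=
        Finset.prod_le_prod (fun j _ => psiF_nonneg a (x j)) (fun j _ => psiF_le a ha (x j))
    _ = (2*a)^n := by rw [Finset.prod_const, Finset.card_univ, Fintype.card_fin]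

lemma Wfun_nonneg (n : ℕ) (a : ℝ) (ξ : EuclideanSpace ℝ (Fin n)) : 0 ≤ Wfun n a ξ :=
  Finset.prod_nonneg fun j _ => Hfun_nonneg a (ξ j)

lemma euclidean_norm_sq (n : ℕ) (x : EuclideanSpace ℝ (Fin n)) :
    ‖x‖^2 = ∑ j, (x j)^2 := by
  rw [EuclideanSpace.norm_eq]
  rw [Real.sq_sqrt (by positivity)]
  congr 1
  ext j
  rw [Real.norm_eq_abs, sq_abs]

lemma continuous_wfun (n : ℕ) (a : ℝ) : Continuous (wfun n a) := by
  apply continuous_finset_prod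
  intro j _
  exact (continuous_psiF a).comp (EuclideanSpace.proj (𝕜 := ℝ) j).continuous

lemma wfun_eq_zero {n : ℕ} (hn : 0 < n) {a : ℝ} (ha : 0 ≤ a)
    {x : EuclideanSpace ℝ (Fin n)} (hx : 2*a*Real.sqrt n ≤ ‖x‖) : wfun n a x = 0 := by
  obtain ⟨j, hj⟩ : ∃ j, 2*a ≤ |x j| := by
    by_contra h
    push_neg at h
    have h1 : ‖x‖^2 < (n:ℝ) * (2*a)^2 := by
      rw [euclidean_norm_sq]
      calc ∑ j, (x j)^2 < ∑ _j : Fin n, (2*a)^2 := by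
            apply Finset.sum_lt_sum_of_nonempty
            · exact Finset.univ_nonempty_iff.mpr (Fin.pos_iff_nonempty.mp hn)
            · intro j _
              rw [← sq_abs]
              apply pow_lt_pow_left₀ (h j) (abs_nonneg _)
              norm_num
        _ = (n:ℝ) * (2*a)^2 := by
            rw [Finset.sum_const, Finset.card_univ, Fintype.card_fin, nsmul_eq_mul]
    have h2 : (2*a*Real.sqrt n)^2 ≤ ‖x‖^2 := by
      apply pow_le_pow_left₀ (by positivity) hx
    rw [mul_pow, Real.sq_sqrt (Nat.cast_nonneg n)] at h2
    nlinarith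
  exact Finset.prod_eq_zero (Finset.mem_univ j) (psiF_eq_zero hj)

lemma integrable_wfun_mul (n : ℕ) (hn : 0 < n) (a : ℝ) (ha : 0 ≤ a)
    (ξ : EuclideanSpace ℝ (Fin n)) :
    Integrable (fun x : EuclideanSpace ℝ (Fin n) =>
      (wfun n a x : ℂ) * Complex.exp (((inner ℝ ξ x : ℝ) : ℂ) * Complex.I)) := by
  apply Continuous.integrable_of_hasCompactSupport
  · apply Continuous.mul
    · exact Complex.continuous_ofReal.comp (continuous_wfun n a)
    · apply Complex.continuous_exp.comp
      apply Continuous.mul _ continuous_const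
      exact Complex.continuous_ofReal.comp (continuous_const.inner continuous_id)
  · apply HasCompactSupport.intro (isCompact_closedBall (0 : EuclideanSpace ℝ (Fin n))
      (2*a*Real.sqrt n))
    intro x hx
    simp only [Metric.mem_closedBall, dist_zero_right, not_le] at hx
    rw [wfun_eq_zero hn ha hx.le]
    simp

lemma integral_wfun_mul (n : ℕ) (a : ℝ) (ha : 0 < a) (ξ : EuclideanSpace ℝ (Fin n)) :
    ∫ x : EuclideanSpace ℝ (Fin n),
      (wfun n a x : ℂ) * Complex.exp (((inner ℝ ξ x : ℝ) : ℂ) * Complex.I)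
      = ((Wfun n a ξ : ℝ) : ℂ) := by
  have hmp := (EuclideanSpace.volume_preserving_symm_measurableEquiv_toLp (Fin n)).symm
  rw [← hmp.integral_comp (MeasurableEquiv.measurableEmbedding _)]
  have hcoords : ∀ (y : Fin n → ℝ) (j : Fin n),
      ((MeasurableEquiv.toLp 2 (Fin n → ℝ)) y) j = y j := fun y j => rfl
  have hstep : ∀ y : Fin n → ℝ,
      (wfun n a ((MeasurableEquiv.toLp 2 (Fin n → ℝ)) y) : ℂ) *
        Complex.exp (((inner ℝ ξ ((MeasurableEquiv.toLp 2 (Fin n → ℝ)) y) : ℝ) : ℂ)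
          * Complex.I)
      = ∏ j, ((psiF a (y j) : ℂ) * Complex.exp (((ξ j : ℝ) : ℂ) * (y j) * Complex.I)) := by
    intro y
    rw [Finset.prod_mul_distrib]
    congr 1
    · unfold wfun
      push_cast
      rfl
    · rw [← Complex.exp_sum]
      congr 1
      have hinner : (inner ℝ ξ ((MeasurableEquiv.toLp 2 (Fin n → ℝ)) y) : ℝ)
          = ∑ j, ξ j * y j := by
        rw [PiLp.inner_apply]
        simp [RCLike.inner_apply, hcoords]
        exact Finset.sum_congr rfl fun i _ => mul_comm _ _
      rw [hinner]
      push_cast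
      rw [Finset.sum_mul]
  calc (∫ y : Fin n → ℝ, (wfun n a ((MeasurableEquiv.toLp 2 (Fin n → ℝ)) y) : ℂ) *
        Complex.exp (((inner ℝ ξ ((MeasurableEquiv.toLp 2 (Fin n → ℝ)) y) : ℝ) : ℂ)
          * Complex.I))
      = ∫ y : Fin n → ℝ, ∏ j, ((psiF a (y j) : ℂ) *
          Complex.exp (((ξ j : ℝ) : ℂ) * (y j) * Complex.I)) := by
        congr 1
        ext y
        exact hstep y
    _ = ∏ j, ∫ t : ℝ, ((psiF a t : ℂ) * Complex.exp (((ξ j : ℝ) : ℂ) * t * Complex.I)) := by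
        exact MeasureTheory.integral_fintype_prod_eq_prod
          (f := fun j (t : ℝ) => (psiF a t : ℂ) * Complex.exp (((ξ j : ℝ) : ℂ) * t * Complex.I))
    _ = ∏ j, ((Hfun a (ξ j) : ℝ) : ℂ) := by
        apply Finset.prod_congr rfl
        intro j _
        exact integral_psiF_mul a ha (ξ j)
    _ = ((Wfun n a ξ : ℝ) : ℂ) := by
        unfold Wfun
        push_cast
        rfl

lemma sum_F_ne_zero (s₀ : ℝ) (hs : 0 < s₀) (B : Finset ℤ) :
    ∑ m ∈ B, (if m = 0 then (0:ℝ) else 16/((m:ℝ)*s₀)^2) ≤ 64/s₀^2 := by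
  have h1 : ∀ m : ℤ, (if m = 0 then (0:ℝ) else 16/((m:ℝ)*s₀)^2)
      = (16/s₀^2) * (if m = 0 then (0:ℝ) else 1/(m:ℝ)^2) := by
    intro m
    split_ifs with h
    · ring
    · have hm : ((m:ℝ)) ≠ 0 := Int.cast_ne_zero.mpr h
      field_simp
  simp_rw [h1, ← Finset.mul_sum]
  have := sum_int_one_div_sq B
  have h16 : (0:ℝ) ≤ 16/s₀^2 := by positivity
  calc (16/s₀^2) * ∑ m ∈ B, (if m = 0 then (0:ℝ) else 1/(m:ℝ)^2)
      ≤ (16/s₀^2) * 4 := by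
        apply mul_le_mul_of_nonneg_left this h16
    _ = 64/s₀^2 := by ring

lemma sum_F_all (a s₀ : ℝ) (ha : 0 ≤ a) (hs : 0 < s₀) (B : Finset ℤ) :
    ∑ m ∈ B, (if m = 0 then 4*a^2 else 16/((m:ℝ)*s₀)^2) ≤ 4*a^2 + 64/s₀^2 := by
  have h1 : ∀ m : ℤ, (if m = 0 then 4*a^2 else 16/((m:ℝ)*s₀)^2)
      = (if m = 0 then 4*a^2 else 0) + (if m = 0 then (0:ℝ) else 16/((m:ℝ)*s₀)^2) := by
    intro m; split_ifs <;> ring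
  simp_rw [h1, Finset.sum_add_distrib]
  have h2 : ∑ m ∈ B, (if m = 0 then 4*a^2 else (0:ℝ)) ≤ 4*a^2 := by
    rw [Finset.sum_ite_eq' B (0:ℤ) (fun _ => 4*a^2)]
    split_ifs
    · exact le_refl _
    · positivity
  have h3 := sum_F_ne_zero s₀ hs B
  linarith

noncomputable local instance euclDecEq (n : ℕ) : DecidableEq (EuclideanSpace ℝ (Fin n)) :=
  Classical.decEq _

lemma key_count (n : ℕ) (hn : 0 < n) (a s₀ δ : ℝ) (ha : 0 ≤ a) (hδ : 0 < δ)
    (hsδ : s₀ = δ/(2*Real.sqrt n))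
    (t : Finset (EuclideanSpace ℝ (Fin n)))
    (hsep : ∀ x ∈ t, ∀ y ∈ t, x ≠ y → δ ≤ dist x y)
    (γ : EuclideanSpace ℝ (Fin n)) (hγ : γ ∈ t) :
    ∑ γ' ∈ t.erase γ, Wfun n a (γ - γ') ≤
      (n:ℝ) * ((64/s₀^2) * (4*a^2 + 64/s₀^2)^(n-1)) := by
  classical
  have hsqn : (0:ℝ) < Real.sqrt n := Real.sqrt_pos.mpr (by exact_mod_cast hn)
  have hs : 0 < s₀ := by rw [hsδ]; positivity
  set F : ℤ → ℝ := fun k => if k = 0 then 4*a^2 else 16/((k:ℝ)*s₀)^2 with hF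
  have hFnn : ∀ k, 0 ≤ F k := by
    intro k
    simp only [hF]
    split_ifs with h
    · positivity
    · have : ((k:ℝ)) ≠ 0 := Int.cast_ne_zero.mpr h
      positivity
  set φ : EuclideanSpace ℝ (Fin n) → (Fin n → ℤ) := fun ξ j => round (ξ j / s₀) with hφ
  -- pointwise bound
  have claim1 : ∀ (ξ : EuclideanSpace ℝ (Fin n)) (j : Fin n), Hfun a (ξ j) ≤ F (φ ξ j) := by
    intro ξ j
    simp only [hφ, hF]
    set k : ℤ := round (ξ j / s₀) with hk
    split_ifs with h
    · exact Hfun_le_sq a ha (ξ j)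
    · have hr : |ξ j / s₀ - (k:ℝ)| ≤ 1/2 := abs_sub_round _
      have hk1 : (1:ℝ) ≤ |(k:ℝ)| := by
        rw [← Int.cast_abs]
        exact_mod_cast Int.one_le_abs (by simpa using h)
      have habs : |(k:ℝ)|/2 * s₀ ≤ |ξ j| := by
        have h2 : |(k:ℝ)| - 1/2 ≤ |ξ j / s₀| := by
          have := abs_sub_abs_le_abs_sub ((k:ℝ)) (ξ j / s₀)
          have h3 : |(k:ℝ) - ξ j / s₀| ≤ 1/2 := by rwa [abs_sub_comm]
          linarith
        have h4 : |ξ j / s₀| = |ξ j| / s₀ := by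
          rw [abs_div, abs_of_pos hs]
        rw [h4] at h2
        have h5 := (le_div_iff₀ hs).mp h2
        nlinarith [hs, hk1, h5]
      have hξ : ξ j ≠ 0 := by
        intro h0
        rw [h0, abs_zero] at habs
        nlinarith
      have h6 : Hfun a (ξ j) ≤ 4/(ξ j)^2 := Hfun_le_inv a hξ
      have h7 : ((k:ℝ)*s₀)^2/4 ≤ (ξ j)^2 := by
        have h71 : (|(k:ℝ)|/2 * s₀)^2 ≤ |ξ j|^2 :=
          pow_le_pow_left₀ (by positivity) habs 2
        rw [sq_abs] at h71
        have h72 : |(k:ℝ)|^2 * s₀^2 = (k:ℝ)^2 * s₀^2 := by rw [sq_abs]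
        nlinarith [h71, h72]
      have hks : ((k:ℝ)*s₀)^2 > 0 := by
        have : ((k:ℝ)) ≠ 0 := fun h0 => by simp [Int.cast_eq_zero.mp h0] at h
        positivity
      calc Hfun a (ξ j) ≤ 4/(ξ j)^2 := h6
        _ ≤ 16/((k:ℝ)*s₀)^2 := by
            rw [div_le_div_iff₀ (by positivity) hks]
            nlinarith
  -- injectivity
  have claim2 : ∀ x ∈ t.erase γ, ∀ y ∈ t.erase γ, φ (γ - x) = φ (γ - y) → x = y := by
    intro x hx y hy hxy
    by_contra hne
    have hxt := Finset.mem_of_mem_erase hx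
    have hyt := Finset.mem_of_mem_erase hy
    have hd := hsep x hxt y hyt hne
    have hcoord : ∀ j, |x j - y j| ≤ s₀ := by
      intro j
      have h1 : round ((γ - x) j / s₀) = round ((γ - y) j / s₀) := congrFun hxy j
      have h2 : |(γ - x) j / s₀ - (round ((γ - x) j / s₀) : ℝ)| ≤ 1/2 := abs_sub_round _
      have h3 : |(γ - y) j / s₀ - (round ((γ - y) j / s₀) : ℝ)| ≤ 1/2 := abs_sub_round _
      rw [h1] at h2
      have h4 : |(γ - x) j / s₀ - (γ - y) j / s₀| ≤ 1 := by
        have h5 := abs_sub_le ((γ - x) j / s₀) ((round ((γ - y) j / s₀) : ℝ)) ((γ - y) j / s₀)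
        rw [abs_sub_comm ((round ((γ - y) j / s₀) : ℝ)) ((γ - y) j / s₀)] at h5
        linarith
      have h6 : (γ - x) j - (γ - y) j = y j - x j := by
        simp [PiLp.sub_apply]
      have h7 : |(γ - x) j / s₀ - (γ - y) j / s₀| = |y j - x j| / s₀ := by
        rw [div_sub_div_same, h6, abs_div, abs_of_pos hs]
      rw [h7, div_le_one hs] at h4
      rwa [abs_sub_comm] at h4
    have hdist : dist x y ≤ δ/2 := by
      have h8 : dist x y ^ 2 ≤ (n:ℝ) * s₀^2 := by
        rw [dist_eq_norm, euclidean_norm_sq]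
        calc ∑ j, ((x - y) j)^2 ≤ ∑ _j : Fin n, s₀^2 := by
              apply Finset.sum_le_sum
              intro j _
              have := hcoord j
              have h9 : (x - y) j = x j - y j := by simp [PiLp.sub_apply]
              rw [h9, ← sq_abs]
              exact pow_le_pow_left₀ (abs_nonneg _) this 2
          _ = (n:ℝ) * s₀^2 := by
              rw [Finset.sum_const, Finset.card_univ, Fintype.card_fin, nsmul_eq_mul]
      have h10 : (n:ℝ) * s₀^2 = (δ/2)^2 := by
        rw [hsδ]
        rw [div_pow, mul_pow]
        rw [Real.sq_sqrt (Nat.cast_nonneg n)]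
        field_simp
      rw [h10] at h8
      nlinarith [dist_nonneg (x := x) (y := y), hδ]
    linarith
  -- nonzero
  have claim3 : ∀ γ' ∈ t.erase γ, ∃ j, φ (γ - γ') j ≠ 0 := by
    intro γ' hγ'
    have hne := Finset.ne_of_mem_erase hγ'
    have hγ't := Finset.mem_of_mem_erase hγ'
    have hd : δ ≤ dist γ γ' := hsep γ hγ γ' hγ't (Ne.symm hne)
    obtain ⟨j, hj⟩ : ∃ j, δ^2/n ≤ ((γ - γ') j)^2 := by
      by_contra hcon
      push_neg at hcon
      have h1 : dist γ γ' ^2 < (n:ℝ) * (δ^2/n) := by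
        rw [dist_eq_norm, euclidean_norm_sq]
        calc ∑ j, ((γ - γ') j)^2 < ∑ _j : Fin n, δ^2/n := by
              apply Finset.sum_lt_sum_of_nonempty
              · exact Finset.univ_nonempty_iff.mpr (Fin.pos_iff_nonempty.mp hn)
              · intro j _; exact hcon j
          _ = (n:ℝ) * (δ^2/n) := by
              rw [Finset.sum_const, Finset.card_univ, Fintype.card_fin, nsmul_eq_mul]
      have hn' : (0:ℝ) < n := by exact_mod_cast hn
      rw [mul_div_cancel₀ _ (ne_of_gt hn')] at h1
      nlinarith [dist_nonneg (x := γ) (y := γ')]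
    refine ⟨j, ?_⟩
    rw [hφ]
    simp only
    intro h0
    have h2 : |(γ - γ') j / s₀ - ((0:ℤ):ℝ)| ≤ 1/2 := by
      rw [← h0]; exact abs_sub_round _
    simp only [Int.cast_zero, sub_zero] at h2
    have h3 : |(γ - γ') j| ≤ s₀/2 := by
      rw [abs_div, abs_of_pos hs, div_le_div_iff₀ (by positivity) (by norm_num : (0:ℝ) < 2)] at h2
      linarith
    have h4 : 2*s₀ ≤ |(γ - γ') j| := by
      have h5 : δ/Real.sqrt n = 2*s₀ := by
        rw [hsδ]; field_simp
      rw [← h5]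
      rw [div_le_iff₀ hsqn]
      have h6 : (δ/Real.sqrt n)^2 ≤ ((γ - γ') j)^2 := by
        rw [div_pow, Real.sq_sqrt (Nat.cast_nonneg n)]
        exact hj
      nlinarith [abs_nonneg ((γ - γ') j), sq_abs ((γ - γ') j),
        Real.sqrt_nonneg (n:ℝ), hδ.le, div_nonneg hδ.le hsqn.le]
    nlinarith [hs]
  -- main chain
  set Φ : Finset (Fin n → ℤ) := (t.erase γ).image (fun γ' => φ (γ - γ')) with hΦ
  have hΦ0 : ∀ k ∈ Φ, ∃ j, k j ≠ 0 := by
    intro k hk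
    rw [hΦ, Finset.mem_image] at hk
    obtain ⟨γ', hγ', rfl⟩ := hk
    exact claim3 γ' hγ'
  have S1 : ∑ γ' ∈ t.erase γ, Wfun n a (γ - γ') ≤ ∑ k ∈ Φ, ∏ j, F (k j) := by
    rw [hΦ, Finset.sum_image claim2]
    apply Finset.sum_le_sum
    intro γ' _
    unfold Wfun
    exact Finset.prod_le_prod (fun j _ => Hfun_nonneg a _) (fun j _ => claim1 (γ - γ') j)
  have S3 : ∀ k ∈ Φ, (∏ j, F (k j)) ≤ ∑ j, (if k j ≠ 0 then ∏ i, F (k i) else 0) := by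
    intro k hk
    obtain ⟨j₀, hj₀⟩ := hΦ0 k hk
    have hle := Finset.single_le_sum (f := fun j => if k j ≠ 0 then ∏ i, F (k i) else 0)
      (fun j _ => by
        split_ifs
        · exact Finset.prod_nonneg fun i _ => hFnn _
        · exact le_refl _)
      (Finset.mem_univ j₀)
    rw [if_pos hj₀] at hle
    exact hle
  have S5 : ∀ j : Fin n, ∑ k ∈ Φ, (if k j ≠ 0 then ∏ i, F (k i) else 0)
      ≤ (64/s₀^2) * (4*a^2 + 64/s₀^2)^(n-1) := by
    intro j
    set B : Fin n → Finset ℤ := fun i => Φ.image (fun k => k i) with hB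
    have hsub : Φ ⊆ Fintype.piFinset B := by
      intro k hk
      rw [Fintype.mem_piFinset]
      intro i
      rw [hB]
      exact Finset.mem_image_of_mem _ hk
    set G : Fin n → ℤ → ℝ := fun i m => if i = j then (if m = 0 then 0 else F m) else F m
      with hG
    have hGnn : ∀ i m, 0 ≤ G i m := by
      intro i m
      simp only [hG]
      split_ifs
      · exact le_refl _
      · exact hFnn m
      · exact hFnn m
    calc ∑ k ∈ Φ, (if k j ≠ 0 then ∏ i, F (k i) else 0)
        ≤ ∑ k ∈ Fintype.piFinset B, (if k j ≠ 0 then ∏ i, F (k i) else 0) := by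
          apply Finset.sum_le_sum_of_subset_of_nonneg hsub
          intro k _ _
          split_ifs
          · exact Finset.prod_nonneg fun i _ => hFnn _
          · exact le_refl _
      _ = ∑ k ∈ Fintype.piFinset B, ∏ i, G i (k i) := by
          apply Finset.sum_congr rfl
          intro k _
          by_cases hkj : k j = 0
          · rw [if_neg (by simpa using hkj)]
            rw [eq_comm]
            apply Finset.prod_eq_zero (Finset.mem_univ j)
            simp only [hG]
            simp [hkj]
          · rw [if_pos hkj]
            apply Finset.prod_congr rfl
            intro i _
            simp only [hG]
            split_ifs with h1 h2
            · subst h1; exact absurd h2 hkj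
            · rfl
            · rfl
      _ = ∏ i, ∑ m ∈ B i, G i m := (Finset.prod_univ_sum B G).symm
      _ ≤ (64/s₀^2) * (4*a^2 + 64/s₀^2)^(n-1) := by
          rw [← Finset.mul_prod_erase Finset.univ _ (Finset.mem_univ j)]
          have hfac1 : ∑ m ∈ B j, G j m ≤ 64/s₀^2 := by
            have : ∀ m, G j m = (if m = 0 then (0:ℝ) else 16/((m:ℝ)*s₀)^2) := by
              intro m
              simp only [hG, if_pos rfl]
              split_ifs with h
              · rfl
              · simp only [hF]; simp [h]
            simp_rw [this]
            exact sum_F_ne_zero s₀ hs (B j)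
          have hfac2 : ∏ i ∈ Finset.univ.erase j, (∑ m ∈ B i, G i m)
              ≤ (4*a^2 + 64/s₀^2)^(n-1) := by
            have hcard : (Finset.univ.erase j).card = n - 1 := by
              rw [Finset.card_erase_of_mem (Finset.mem_univ j), Finset.card_univ,
                Fintype.card_fin]
            calc ∏ i ∈ Finset.univ.erase j, (∑ m ∈ B i, G i m)
                ≤ ∏ _i ∈ Finset.univ.erase j, (4*a^2 + 64/s₀^2) := by
                  apply Finset.prod_le_prod
                  · intro i _
                    exact Finset.sum_nonneg fun m _ => hGnn i m
                  · intro i hi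
                    have hij : i ≠ j := Finset.ne_of_mem_erase hi
                    have : ∀ m, G i m = F m := by
                      intro m
                      simp only [hG]
                      simp [hij]
                    simp_rw [this]
                    simp only [hF]
                    exact sum_F_all a s₀ ha hs (B i)
              _ = (4*a^2 + 64/s₀^2)^(n-1) := by
                  rw [Finset.prod_const, hcard]
          have hnn2 : (0:ℝ) ≤ ∏ i ∈ Finset.univ.erase j, (∑ m ∈ B i, G i m) :=
            Finset.prod_nonneg fun i _ => Finset.sum_nonneg fun m _ => hGnn i m
          have hQnn : (0:ℝ) ≤ 64/s₀^2 := by positivity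
          calc (∑ m ∈ B j, G j m) * ∏ i ∈ Finset.univ.erase j, (∑ m ∈ B i, G i m)
              ≤ (64/s₀^2) * ∏ i ∈ Finset.univ.erase j, (∑ m ∈ B i, G i m) := by
                apply mul_le_mul_of_nonneg_right hfac1 hnn2
            _ ≤ (64/s₀^2) * (4*a^2 + 64/s₀^2)^(n-1) := by
                apply mul_le_mul_of_nonneg_left hfac2 hQnn
  calc ∑ γ' ∈ t.erase γ, Wfun n a (γ - γ')
      ≤ ∑ k ∈ Φ, ∏ j, F (k j) := S1
    _ ≤ ∑ k ∈ Φ, ∑ j, (if k j ≠ 0 then ∏ i, F (k i) else 0) := Finset.sum_le_sum S3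
    _ = ∑ j : Fin n, ∑ k ∈ Φ, (if k j ≠ 0 then ∏ i, F (k i) else 0) := Finset.sum_comm
    _ ≤ ∑ _j : Fin n, (64/s₀^2) * (4*a^2 + 64/s₀^2)^(n-1) := Finset.sum_le_sum fun j _ => S5 j
    _ = (n:ℝ) * ((64/s₀^2) * (4*a^2 + 64/s₀^2)^(n-1)) := by
        rw [Finset.sum_const, Finset.card_univ, Fintype.card_fin, nsmul_eq_mul]

lemma sum_erase_comm {A : Type*} [DecidableEq A] (t : Finset A) (g : A → A → ℝ) :
    ∑ x ∈ t, ∑ y ∈ t.erase x, g x y = ∑ y ∈ t, ∑ x ∈ t.erase y, g x y := by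
  have h : ∀ (u : A → A → ℝ), ∀ x ∈ t, ∑ y ∈ t.erase x, u x y
      = ∑ y ∈ t, if y ≠ x then u x y else 0 := by
    intro u x _
    rw [← Finset.filter_ne', Finset.sum_filter]
  rw [Finset.sum_congr rfl (h (fun x y => g x y)), Finset.sum_comm]
  rw [Finset.sum_congr rfl (h (fun y x => g x y))]
  apply Finset.sum_congr rfl
  intro y _
  apply Finset.sum_congr rfl
  intro x _
  exact if_congr ne_comm rfl rfl

lemma norm_sq_re_mul_conj (z : ℂ) : (z * (starRingEnd ℂ) z).re = ‖z‖^2 := by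
  rw [Complex.mul_conj, Complex.ofReal_re]
  exact RCLike.normSq_eq_def' z

lemma quad_lower (n : ℕ) (t : Finset (EuclideanSpace ℝ (Fin n)))
    (α : EuclideanSpace ℝ (Fin n) → ℂ) (W : EuclideanSpace ℝ (Fin n) → ℝ) (D : ℝ)
    (hD : 0 ≤ D)
    (hWnn : ∀ ξ, 0 ≤ W ξ) (hWeven : ∀ ξ, W (-ξ) = W ξ) (hW0 : W 0 = D)
    (hrow : ∀ γ ∈ t, ∑ γ' ∈ t.erase γ, W (γ - γ') ≤ D/2) :
    (D/2) * ∑ γ ∈ t, ‖α γ‖^2 ≤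
      ∑ γ ∈ t, ∑ γ' ∈ t, (α γ * (starRingEnd ℂ) (α γ')).re * W (γ - γ') := by
  classical
  have hW' : ∀ x y : EuclideanSpace ℝ (Fin n), W (x - y) = W (y - x) := by
    intro x y
    rw [← hWeven (y - x), neg_sub]
  set S := ∑ γ ∈ t, ‖α γ‖^2 with hS
  have key1 : ∀ γ ∈ t, ∑ γ' ∈ t.erase γ, ‖α γ‖^2 * W (γ - γ') ≤ ‖α γ‖^2 * (D/2) := by
    intro γ hγ
    rw [← Finset.mul_sum]
    exact mul_le_mul_of_nonneg_left (hrow γ hγ) (by positivity)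
  have hA : ∑ γ ∈ t, ∑ γ' ∈ t.erase γ, ‖α γ‖^2 * W (γ - γ') ≤ S * (D/2) := by
    calc ∑ γ ∈ t, ∑ γ' ∈ t.erase γ, ‖α γ‖^2 * W (γ - γ')
        ≤ ∑ γ ∈ t, ‖α γ‖^2 * (D/2) := Finset.sum_le_sum key1
      _ = S * (D/2) := by rw [hS, ← Finset.sum_mul]
  have hB : ∑ γ ∈ t, ∑ γ' ∈ t.erase γ, ‖α γ'‖^2 * W (γ - γ') ≤ S * (D/2) := by
    rw [sum_erase_comm]
    calc ∑ y ∈ t, ∑ x ∈ t.erase y, ‖α y‖^2 * W (x - y)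
        ≤ ∑ y ∈ t, ‖α y‖^2 * (D/2) := by
          apply Finset.sum_le_sum
          intro y hy
          have hc : ∀ x ∈ t.erase y, ‖α y‖^2 * W (x - y) = ‖α y‖^2 * W (y - x) := by
            intro x _
            rw [hW' x y]
          rw [Finset.sum_congr rfl hc, ← Finset.mul_sum]
          exact mul_le_mul_of_nonneg_left (hrow y hy) (by positivity)
      _ = S * (D/2) := by rw [hS, ← Finset.sum_mul]
  have hmid : ∑ γ ∈ t, ∑ γ' ∈ t.erase γ, ((‖α γ‖^2 + ‖α γ'‖^2)/2) * W (γ - γ')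
      ≤ S * (D/2) := by
    have hexp : ∑ γ ∈ t, ∑ γ' ∈ t.erase γ, ((‖α γ‖^2 + ‖α γ'‖^2)/2) * W (γ - γ')
        = (1/2) * (∑ γ ∈ t, ∑ γ' ∈ t.erase γ, ‖α γ‖^2 * W (γ - γ'))
          + (1/2) * (∑ γ ∈ t, ∑ γ' ∈ t.erase γ, ‖α γ'‖^2 * W (γ - γ')) := by
      rw [Finset.mul_sum, Finset.mul_sum, ← Finset.sum_add_distrib]
      apply Finset.sum_congr rfl
      intro γ _
      rw [Finset.mul_sum, Finset.mul_sum, ← Finset.sum_add_distrib]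
      apply Finset.sum_congr rfl
      intro γ' _
      ring
    rw [hexp]
    linarith
  have step : ∀ γ ∈ t,
      ‖α γ‖^2 * D - ∑ γ' ∈ t.erase γ, ((‖α γ‖^2 + ‖α γ'‖^2)/2) * W (γ - γ')
      ≤ ∑ γ' ∈ t, (α γ * (starRingEnd ℂ) (α γ')).re * W (γ - γ') := by
    intro γ hγ
    rw [← Finset.add_sum_erase t _ hγ]
    have hdiag : (α γ * (starRingEnd ℂ) (α γ)).re * W (γ - γ) = ‖α γ‖^2 * D := by
      rw [sub_self, hW0, norm_sq_re_mul_conj]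
    have hoff : ∀ γ' ∈ t.erase γ,
        -(((‖α γ‖^2 + ‖α γ'‖^2)/2) * W (γ - γ'))
        ≤ (α γ * (starRingEnd ℂ) (α γ')).re * W (γ - γ') := by
      intro γ' _
      have h1 : |(α γ * (starRingEnd ℂ) (α γ')).re| ≤ ‖α γ‖ * ‖α γ'‖ := by
        calc |(α γ * (starRingEnd ℂ) (α γ')).re| ≤ ‖α γ * (starRingEnd ℂ) (α γ')‖ :=
              Complex.abs_re_le_norm _
          _ = ‖α γ‖ * ‖α γ'‖ := by rw [norm_mul, RCLike.norm_conj]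
      have h2 : -((‖α γ‖^2 + ‖α γ'‖^2)/2) ≤ (α γ * (starRingEnd ℂ) (α γ')).re := by
        have h3 := (abs_le.mp h1).1
        nlinarith [sq_nonneg (‖α γ‖ - ‖α γ'‖)]
      calc -(((‖α γ‖^2 + ‖α γ'‖^2)/2) * W (γ - γ'))
          = (-((‖α γ‖^2 + ‖α γ'‖^2)/2)) * W (γ - γ') := by ring
        _ ≤ (α γ * (starRingEnd ℂ) (α γ')).re * W (γ - γ') :=
            mul_le_mul_of_nonneg_right h2 (hWnn _)
    have h4 := Finset.sum_le_sum hoff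
    rw [Finset.sum_neg_distrib] at h4
    linarith [h4, hdiag.ge, hdiag.le]
  have htot := Finset.sum_le_sum step
  rw [Finset.sum_sub_distrib] at htot
  have hSD : ∑ γ ∈ t, ‖α γ‖^2 * D = S * D := by rw [hS, ← Finset.sum_mul]
  rw [hSD] at htot
  have : (D/2) * S ≤ S * D - S * (D/2) := by ring_nf; linarith [hmid]
  linarith

lemma numeric_bound (n : ℕ) (hn : 1 ≤ n) (P Q : ℝ) (hQ : 0 < Q)
    (hPQ : 2*(n:ℝ)*2^n*Q ≤ P) :
    (n:ℝ) * (Q * (P + Q)^(n-1)) ≤ (1/2) * P^n := by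
  have hnR : (1:ℝ) ≤ n := by exact_mod_cast hn
  have h2n : (1:ℝ) ≤ 2^n := one_le_pow₀ (by norm_num)
  have hab : (1:ℝ) ≤ (n:ℝ)*2^n := by
    nlinarith [mul_le_mul hnR h2n (by norm_num : (0:ℝ) ≤ 1) (by linarith : (0:ℝ) ≤ (n:ℝ))]
  have habQ : Q ≤ (n:ℝ)*2^n*Q := by nlinarith [mul_le_mul_of_nonneg_right hab hQ.le]
  have hP : 0 < P := by nlinarith
  have hQP : Q ≤ P := by nlinarith
  have h1 : P + Q ≤ 2*P := by linarith
  have h2 : (P+Q)^(n-1) ≤ (2*P)^(n-1) := pow_le_pow_left₀ (by positivity) h1 _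
  have h3 : (n:ℝ) * (Q * (P+Q)^(n-1)) ≤ (n:ℝ) * (Q * (2*P)^(n-1)) := by
    apply mul_le_mul_of_nonneg_left (mul_le_mul_of_nonneg_left h2 hQ.le) (by positivity)
  refine h3.trans ?_
  have hsplit2 : (2:ℝ)^n = 2^(n-1) * 2 := by
    rw [← pow_succ]
    congr 1
    omega
  have hsplitP : P^n = P^(n-1) * P := by
    rw [← pow_succ]
    congr 1
    omega
  rw [mul_pow, hsplitP]
  have h4 : 4*(n:ℝ)*2^(n-1)*Q ≤ P := by
    rw [hsplit2] at hPQ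
    nlinarith
  have h5 := mul_le_mul_of_nonneg_right h4 (pow_nonneg hP.le (n-1))
  nlinarith [pow_nonneg hP.le (n-1), pow_nonneg (by norm_num : (0:ℝ) ≤ 2) (n-1), hQ.le]

lemma Wfun_zero (n : ℕ) (a : ℝ) : Wfun n a 0 = (4*a^2)^n := by
  unfold Wfun
  have h : ∀ j : Fin n, ((0 : EuclideanSpace ℝ (Fin n)) j) = (0:ℝ) := fun j => rfl
  calc ∏ j, Hfun a ((0 : EuclideanSpace ℝ (Fin n)) j) = ∏ _j : Fin n, (4*a^2) := by
        apply Finset.prod_congr rfl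
        intro j _
        rw [h j]
        unfold Hfun
        rw [if_pos rfl]
    _ = (4*a^2)^n := by rw [Finset.prod_const, Finset.card_univ, Fintype.card_fin]

lemma Wfun_even (n : ℕ) (a : ℝ) (ξ : EuclideanSpace ℝ (Fin n)) :
    Wfun n a (-ξ) = Wfun n a ξ := by
  unfold Wfun
  apply Finset.prod_congr rfl
  intro j _
  have h : ((-ξ : EuclideanSpace ℝ (Fin n)) j) = -(ξ j) := rfl
  rw [h, Hfun_even]


theorem stmt8 (n : ℕ) (hn : 1 ≤ n) :
    ∃ c > (0 : ℝ), ∀ δ > (0 : ℝ), ∃ C > (0 : ℝ),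
      ∀ R : ℝ, c / δ ≤ R →
        ∀ Γ : Set (EuclideanSpace ℝ (Fin n)), ENNReal.ofReal δ ≤ setGap Γ →
          ∀ α : EuclideanSpace ℝ (Fin n) →₀ ℂ, (α.support : Set (EuclideanSpace ℝ (Fin n))) ⊆ Γ →
            C * ∑ γ ∈ α.support, ‖α γ‖ ^ 2 ≤
              ∫ x in Metric.ball (0 : EuclideanSpace ℝ (Fin n)) R,
                ‖∑ γ ∈ α.support, α γ * Complex.exp ((inner ℝ γ x : ℝ) * Complex.I)‖ ^ 2 := by
  classical
  have hn0 : 0 < n := hn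
  have hnR : (0:ℝ) < n := by exact_mod_cast hn0
  have hc0 : (0:ℝ) < 16 * (n:ℝ)^2 * 2^n := by positivity
  refine ⟨16 * (n:ℝ)^2 * 2^n, hc0, ?_⟩
  intro δ hδ
  have hsqn : (0:ℝ) < Real.sqrt n := Real.sqrt_pos.mpr hnR
  set c : ℝ := 16 * (n:ℝ)^2 * 2^n with hc
  set a : ℝ := c/(2*Real.sqrt n*δ) with ha
  set s₀ : ℝ := δ/(2*Real.sqrt n) with hs₀
  have hapos : 0 < a := by rw [ha]; positivity
  have hCpos : (0:ℝ) < (1/2)*(2*a)^n := by positivity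
  refine ⟨(1/2)*(2*a)^n, hCpos, ?_⟩
  intro R hR Γ hgap α hsupp
  set t := α.support with ht
  -- separation
  have hsep : ∀ x ∈ t, ∀ y ∈ t, x ≠ y → δ ≤ dist x y := by
    intro x hx y hy hxy
    have hxΓ : x ∈ Γ := hsupp (Finset.mem_coe.mpr hx)
    have hyΓ : y ∈ Γ := hsupp (Finset.mem_coe.mpr hy)
    have hne : (⟨x, hxΓ⟩ : Γ) ≠ (⟨y, hyΓ⟩ : Γ) := by
      intro hcon
      exact hxy (congrArg Subtype.val hcon)
    have h1 : setGap Γ ≤ edist x y := by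
      calc setGap Γ
          ≤ ⨅ (y' : Γ) (_ : (⟨x, hxΓ⟩ : Γ) ≠ y'),
              edist x (y' : EuclideanSpace ℝ (Fin n)) := iInf_le _ (⟨x, hxΓ⟩ : Γ)
        _ ≤ ⨅ (_ : (⟨x, hxΓ⟩ : Γ) ≠ (⟨y, hyΓ⟩ : Γ)), edist x y := iInf_le _ (⟨y, hyΓ⟩ : Γ)
        _ ≤ edist x y := iInf_le _ hne
    have h2 := le_trans hgap h1
    rw [edist_dist] at h2
    exact (ENNReal.ofReal_le_ofReal_iff dist_nonneg).mp h2
  -- numeric facts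
  have hs0pos : 0 < s₀ := by rw [hs₀]; positivity
  have hsqn2 : Real.sqrt n ^ 2 = (n:ℝ) := Real.sq_sqrt (Nat.cast_nonneg n)
  have hQval : 64/s₀^2 = 256*(n:ℝ)/δ^2 := by
    rw [hs₀, div_pow, show (2*Real.sqrt n)^2 = 4*(Real.sqrt n)^2 by ring, hsqn2]
    field_simp
    ring
  have hPval : 4*a^2 = c^2/((n:ℝ)*δ^2) := by
    rw [ha, div_pow, show (2*Real.sqrt n*δ)^2 = 4*(Real.sqrt n)^2*δ^2 by ring, hsqn2]
    field_simp
  have hn1 : (1:ℝ) ≤ (n:ℝ) := by exact_mod_cast hn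
  have h2n : (2:ℝ) ≤ 2^n := by
    calc (2:ℝ) = 2^1 := (pow_one 2).symm
      _ ≤ 2^n := pow_le_pow_right₀ (by norm_num) hn
  have hPQ : 2*(n:ℝ)*2^n*(64/s₀^2) ≤ 4*a^2 := by
    rw [hQval, hPval, hc]
    have hδ2 : (0:ℝ) < δ^2 := by positivity
    rw [show 2*(n:ℝ)*2^n*(256*(n:ℝ)/δ^2) = (512*(n:ℝ)^2*2^n)/δ^2 by ring]
    rw [show (16*(n:ℝ)^2*2^n)^2/((n:ℝ)*δ^2) = (256*(n:ℝ)^3*(2^n)^2)/δ^2 by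
      field_simp; ring]
    rw [div_le_div_iff_of_pos_right hδ2]
    have hkey : (2:ℝ) ≤ (n:ℝ)*2^n := by
      nlinarith [mul_le_mul hn1 h2n (by norm_num : (0:ℝ) ≤ 2) (by linarith : (0:ℝ) ≤ (n:ℝ))]
    nlinarith [mul_le_mul_of_nonneg_left hkey
      (show (0:ℝ) ≤ 256*(n:ℝ)^2*2^n by positivity)]
  have hrow : ∀ γ ∈ t, ∑ γ' ∈ t.erase γ, Wfun n a (γ - γ') ≤ (4*a^2)^n/2 := by
    intro γ hγ
    have h1 := key_count n hn0 a s₀ δ hapos.le hδ hs₀ t hsep γ hγ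
    have h2 := numeric_bound n hn (4*a^2) (64/s₀^2) (by positivity) hPQ
    calc ∑ γ' ∈ t.erase γ, Wfun n a (γ - γ')
        ≤ (n:ℝ) * ((64/s₀^2) * (4*a^2 + 64/s₀^2)^(n-1)) := h1
      _ ≤ (1/2) * (4*a^2)^n := h2
      _ = (4*a^2)^n/2 := by ring
  -- the exponential sum
  set f : EuclideanSpace ℝ (Fin n) → ℂ :=
    fun x => ∑ γ ∈ t, α γ * Complex.exp (((inner ℝ γ x : ℝ):ℂ) * Complex.I) with hf
  have hfcont : Continuous f := by
    rw [hf]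
    apply continuous_finset_sum
    intro γ _
    apply Continuous.mul continuous_const
    apply Complex.continuous_exp.comp
    apply Continuous.mul _ continuous_const
    exact Complex.continuous_ofReal.comp (continuous_const.inner continuous_id)
  have hpt : ∀ x, (wfun n a x : ℂ) * (f x * (starRingEnd ℂ) (f x))
      = ∑ γ ∈ t, ∑ γ' ∈ t, (α γ * (starRingEnd ℂ) (α γ')) *
          ((wfun n a x : ℂ) * Complex.exp (((inner ℝ (γ - γ') x : ℝ):ℂ) * Complex.I)) := by
    intro x
    rw [hf]
    rw [map_sum]
    rw [Finset.sum_mul_sum]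
    rw [Finset.mul_sum]
    apply Finset.sum_congr rfl
    intro γ _
    rw [Finset.mul_sum]
    apply Finset.sum_congr rfl
    intro γ' _
    rw [map_mul]
    have hconjexp : (starRingEnd ℂ) (Complex.exp (((inner ℝ γ' x : ℝ):ℂ) * Complex.I))
        = Complex.exp (-(((inner ℝ γ' x : ℝ):ℂ) * Complex.I)) := by
      rw [← Complex.exp_conj]
      congr 1
      rw [map_mul, Complex.conj_I, Complex.conj_ofReal]
      ring
    rw [hconjexp]
    have hsub : ((inner ℝ (γ - γ') x : ℝ):ℂ) = ((inner ℝ γ x : ℝ):ℂ) - ((inner ℝ γ' x : ℝ):ℂ) := by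
      rw [show (inner ℝ (γ - γ') x : ℝ) = inner ℝ γ x - inner ℝ γ' x from inner_sub_left γ γ' x]
      push_cast
      ring
    rw [hsub]
    rw [show (((inner ℝ γ x : ℝ):ℂ) - ((inner ℝ γ' x : ℝ):ℂ)) * Complex.I
        = ((inner ℝ γ x : ℝ):ℂ) * Complex.I + -(((inner ℝ γ' x : ℝ):ℂ) * Complex.I) by ring]
    rw [Complex.exp_add]
    ring
  set J := ∫ x, (wfun n a x : ℂ) * (f x * (starRingEnd ℂ) (f x)) with hJ
  have hJval : J = ∑ γ ∈ t, ∑ γ' ∈ t,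
      (α γ * (starRingEnd ℂ) (α γ')) * ((Wfun n a (γ - γ') : ℝ):ℂ) := by
    rw [hJ]
    rw [show (fun x => (wfun n a x : ℂ) * (f x * (starRingEnd ℂ) (f x)))
        = fun x => ∑ γ ∈ t, ∑ γ' ∈ t, (α γ * (starRingEnd ℂ) (α γ')) *
          ((wfun n a x : ℂ) * Complex.exp (((inner ℝ (γ - γ') x : ℝ):ℂ) * Complex.I)) from
      funext hpt]
    rw [MeasureTheory.integral_finset_sum t (fun γ _ => ?_)]
    · apply Finset.sum_congr rfl
      intro γ _
      rw [MeasureTheory.integral_finset_sum t (fun γ' _ => ?_)]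
      · apply Finset.sum_congr rfl
        intro γ' _
        rw [MeasureTheory.integral_const_mul]
        rw [integral_wfun_mul n a hapos (γ - γ')]
      · exact (integrable_wfun_mul n hn0 a hapos.le (γ - γ')).const_mul _
    · apply MeasureTheory.integrable_finset_sum
      intro γ' _
      exact (integrable_wfun_mul n hn0 a hapos.le (γ - γ')).const_mul _
  have hreal : ∫ x, wfun n a x * ‖f x‖^2 = J.re := by
    have hpt2 : ∀ x, ((wfun n a x * ‖f x‖^2 : ℝ):ℂ)
        = (wfun n a x : ℂ) * (f x * (starRingEnd ℂ) (f x)) := by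
      intro x
      calc ((wfun n a x * ‖f x‖^2 : ℝ):ℂ)
          = (wfun n a x : ℂ) * ((‖f x‖^2 : ℝ):ℂ) := by push_cast; ring
        _ = (wfun n a x : ℂ) * (f x * (starRingEnd ℂ) (f x)) := by
            rw [Complex.mul_conj]
            congr 1
            exact congrArg Complex.ofReal (RCLike.normSq_eq_def' (f x)).symm
    rw [hJ]
    rw [show (fun x => (wfun n a x : ℂ) * (f x * (starRingEnd ℂ) (f x)))
        = fun x => ((wfun n a x * ‖f x‖^2 : ℝ):ℂ) from funext fun x => (hpt2 x).symm]
    rw [show (∫ x, ((wfun n a x * ‖f x‖^2 : ℝ) : ℂ))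
        = ((∫ x, wfun n a x * ‖f x‖^2 : ℝ) : ℂ) from integral_ofReal, Complex.ofReal_re]
  have hJre : J.re = ∑ γ ∈ t, ∑ γ' ∈ t,
      (α γ * (starRingEnd ℂ) (α γ')).re * Wfun n a (γ - γ') := by
    rw [hJval, Complex.re_sum]
    apply Finset.sum_congr rfl
    intro γ _
    rw [Complex.re_sum]
    apply Finset.sum_congr rfl
    intro γ' _
    rw [Complex.mul_re]
    simp [Complex.ofReal_re, Complex.ofReal_im]
  have hquad := quad_lower n t (fun γ => α γ) (Wfun n a) ((4*a^2)^n) (by positivity)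
    (Wfun_nonneg n a) (Wfun_even n a) (Wfun_zero n a) hrow
  -- integral comparison on the ball
  have h2asq : 2*a*Real.sqrt n = c/δ := by
    rw [ha]
    field_simp
  have hzero : ∀ x ∉ Metric.ball (0:EuclideanSpace ℝ (Fin n)) R,
      wfun n a x * ‖f x‖^2 = 0 := by
    intro x hx
    simp only [Metric.mem_ball, dist_zero_right, not_lt] at hx
    rw [wfun_eq_zero hn0 hapos.le (le_trans (by rw [h2asq]; exact hR) hx), zero_mul]
  have hIeq : ∫ x in Metric.ball (0:EuclideanSpace ℝ (Fin n)) R, wfun n a x * ‖f x‖^2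
      = ∫ x, wfun n a x * ‖f x‖^2 :=
    MeasureTheory.setIntegral_eq_integral_of_forall_compl_eq_zero hzero
  have hfc2 : Continuous fun x : EuclideanSpace ℝ (Fin n) => ‖f x‖^2 := (hfcont.norm).pow 2
  have hwc : Continuous fun x : EuclideanSpace ℝ (Fin n) => wfun n a x * ‖f x‖^2 :=
    (continuous_wfun n a).mul hfc2
  have hInt1 : MeasureTheory.IntegrableOn (fun x => wfun n a x * ‖f x‖^2)
      (Metric.ball (0:EuclideanSpace ℝ (Fin n)) R) :=
    (hwc.locallyIntegrable.integrableOn_isCompact (isCompact_closedBall 0 R)).mono_set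
      Metric.ball_subset_closedBall
  have hInt2 : MeasureTheory.IntegrableOn (fun x => (2*a)^n * ‖f x‖^2)
      (Metric.ball (0:EuclideanSpace ℝ (Fin n)) R) :=
    ((continuous_const.mul hfc2).locallyIntegrable.integrableOn_isCompact
      (isCompact_closedBall 0 R)).mono_set Metric.ball_subset_closedBall
  have hmono : ∫ x in Metric.ball (0:EuclideanSpace ℝ (Fin n)) R, wfun n a x * ‖f x‖^2
      ≤ ∫ x in Metric.ball (0:EuclideanSpace ℝ (Fin n)) R, (2*a)^n * ‖f x‖^2 := by
    apply MeasureTheory.setIntegral_mono_on hInt1 hInt2 measurableSet_ball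
    intro x _
    exact mul_le_mul_of_nonneg_right (wfun_le n a hapos.le x) (by positivity)
  have hconst : ∫ x in Metric.ball (0:EuclideanSpace ℝ (Fin n)) R, (2*a)^n * ‖f x‖^2
      = (2*a)^n * ∫ x in Metric.ball (0:EuclideanSpace ℝ (Fin n)) R, ‖f x‖^2 :=
    MeasureTheory.integral_const_mul _ _
  have hchain : ((4*a^2)^n/2) * ∑ γ ∈ t, ‖α γ‖^2
      ≤ (2*a)^n * ∫ x in Metric.ball (0:EuclideanSpace ℝ (Fin n)) R, ‖f x‖^2 := by
    calc ((4*a^2)^n/2) * ∑ γ ∈ t, ‖α γ‖^2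
        ≤ ∑ γ ∈ t, ∑ γ' ∈ t, (α γ * (starRingEnd ℂ) (α γ')).re * Wfun n a (γ - γ') := hquad
      _ = J.re := hJre.symm
      _ = ∫ x, wfun n a x * ‖f x‖^2 := hreal.symm
      _ = ∫ x in Metric.ball (0:EuclideanSpace ℝ (Fin n)) R, wfun n a x * ‖f x‖^2 := hIeq.symm
      _ ≤ ∫ x in Metric.ball (0:EuclideanSpace ℝ (Fin n)) R, (2*a)^n * ‖f x‖^2 := hmono
      _ = (2*a)^n * ∫ x in Metric.ball (0:EuclideanSpace ℝ (Fin n)) R, ‖f x‖^2 := hconst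
  have hid : (4*a^2)^n = (2*a)^n * (2*a)^n := by
    rw [← mul_pow]
    congr 1
    ring
  have h2an : (0:ℝ) < (2*a)^n := by positivity
  show (1/2)*(2*a)^n * ∑ γ ∈ t, ‖α γ‖^2
      ≤ ∫ x in Metric.ball (0:EuclideanSpace ℝ (Fin n)) R, ‖f x‖^2
  apply le_of_mul_le_mul_left _ h2an
  calc (2*a)^n * ((1/2)*(2*a)^n * ∑ γ ∈ t, ‖α γ‖^2)
      = ((4*a^2)^n/2) * ∑ γ ∈ t, ‖α γ‖^2 := by rw [hid]; ring
    _ ≤ (2*a)^n * ∫ x in Metric.ball (0:EuclideanSpace ℝ (Fin n)) R, ‖f x‖^2 := hchain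
end

section
/- Let d ≥ 1 and let u : ℝᵈ → ℂ be a continuous function with compact support. Then ∫_{[0,1)ᵈ} ∫_{(−π,π)ᵈ} | Σ_{k ∈ ℤᵈ} exp(2πi⟨θ, k⟩) · u(y + 2πk) |² dy dθ = ∫_{ℝᵈ} |u(x)|² dx. -/
open MeasureTheory

section aux

lemma aux_fourier1d (m : ℤ) :
    ∫ t in Set.Ico (0:ℝ) 1, Complex.exp (2 * Real.pi * Complex.I * m * t) =
      if m = 0 then 1 else 0 := by
  rw [Measure.restrict_congr_set Ico_ae_eq_Ioc,
    ← intervalIntegral.integral_of_le zero_le_one]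
  by_cases hm : m = 0
  · simp [hm]
  · have hc : (2 * Real.pi * Complex.I * m : ℂ) ≠ 0 := by
      simp [Real.pi_ne_zero, Complex.I_ne_zero, hm]
    simp only [if_neg hm]
    rw [integral_exp_mul_complex hc]
    have h1 : Complex.exp (2 * Real.pi * Complex.I * m * (1:ℝ)) = 1 := by
      rw [Complex.ofReal_one, mul_one]
      have := Complex.exp_int_mul_two_pi_mul_I m
      rw [← this]
      ring_nf
    rw [h1]
    simp

lemma aux_orth (d : ℕ) (m : Fin d → ℤ) :
    ∫ θ in Set.univ.pi fun _ : Fin d => Set.Ico (0:ℝ) 1,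
      Complex.exp (2 * Real.pi * Complex.I * ((∑ i, θ i * (m i : ℝ) : ℝ) : ℂ)) =
      if m = 0 then 1 else 0 := by
  have hs : MeasurableSet (Set.univ.pi fun _ : Fin d => Set.Ico (0:ℝ) 1) :=
    MeasurableSet.univ_pi fun _ => measurableSet_Ico
  have hexp : ∀ θ : Fin d → ℝ,
      Complex.exp (2 * Real.pi * Complex.I * ((∑ i, θ i * (m i : ℝ) : ℝ) : ℂ))
        = ∏ i, Complex.exp (2 * Real.pi * Complex.I * (m i) * (θ i)) := by
    intro θ
    rw [← Complex.exp_sum]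
    congr 1
    push_cast
    rw [Finset.mul_sum]
    exact Finset.sum_congr rfl fun i _ => by ring
  rw [← integral_indicator hs]
  have key : ∀ θ : Fin d → ℝ,
      (Set.univ.pi fun _ : Fin d => Set.Ico (0:ℝ) 1).indicator
        (fun θ => Complex.exp (2 * Real.pi * Complex.I * ((∑ i, θ i * (m i : ℝ) : ℝ) : ℂ))) θ
      = ∏ i, (Set.Ico (0:ℝ) 1).indicator
          (fun t : ℝ => Complex.exp (2 * Real.pi * Complex.I * (m i) * t)) (θ i) := by
    intro θ
    by_cases hθ : θ ∈ Set.univ.pi fun _ : Fin d => Set.Ico (0:ℝ) 1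
    · rw [Set.indicator_of_mem hθ, hexp]
      refine Finset.prod_congr rfl fun i _ => ?_
      exact (Set.indicator_of_mem (hθ i trivial)
        (fun t : ℝ => Complex.exp (2 * Real.pi * Complex.I * (m i) * t))).symm
    · rw [Set.indicator_of_notMem hθ]
      symm
      simp only [Set.mem_pi, Set.mem_univ, forall_true_left] at hθ
      push_neg at hθ
      obtain ⟨i, hi⟩ := hθ
      exact Finset.prod_eq_zero (Finset.mem_univ i) (Set.indicator_of_notMem hi _)
  simp_rw [key]
  rw [volume_pi, MeasureTheory.integral_fintype_prod_eq_prod (ι := Fin d)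
    (fun i t => (Set.Ico (0:ℝ) 1).indicator
      (fun t : ℝ => Complex.exp (2 * Real.pi * Complex.I * (m i) * t)) t)]
  simp_rw [integral_indicator measurableSet_Ico, aux_fourier1d]
  by_cases hm : m = 0
  · simp [hm]
  · rw [if_neg hm]
    obtain ⟨i, hi⟩ := Function.ne_iff.mp hm
    exact Finset.prod_eq_zero (Finset.mem_univ i) (by simpa using hi)

lemma aux_tiling (d : ℕ) (f : (Fin d → ℝ) → ℝ) (hf_cont : Continuous f)
    (hf_supp : HasCompactSupport f) (N : ℕ) (hN1 : 1 ≤ N)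
    (hNf : ∀ x : Fin d → ℝ, f x ≠ 0 → ∀ i, |x i| ≤ N) :
    ∑ k ∈ Fintype.piFinset (fun _ : Fin d => Finset.Icc (-(N:ℤ)) N),
      ∫ y in Set.univ.pi fun _ : Fin d => Set.Ioo (-Real.pi) Real.pi,
        f (y + fun i => 2 * Real.pi * (k i : ℝ))
      = ∫ x, f x := by
  have hf_int : Integrable f := hf_cont.integrable_of_hasCompactSupport hf_supp
  set T : (Fin d → ℤ) → Set (Fin d → ℝ) := fun k =>
    Set.univ.pi fun i => Set.Ioo (2 * Real.pi * k i - Real.pi) (2 * Real.pi * k i + Real.pi)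
    with hT
  have hTmeas : ∀ k, MeasurableSet (T k) := fun k =>
    MeasurableSet.univ_pi fun _ => measurableSet_Ioo
  have step1 : ∀ k : Fin d → ℤ,
      ∫ y in Set.univ.pi fun _ : Fin d => Set.Ioo (-Real.pi) Real.pi,
        f (y + fun i => 2 * Real.pi * (k i : ℝ)) = ∫ x in T k, f x := by
    intro k
    set c : Fin d → ℝ := fun i => 2 * Real.pi * (k i : ℝ) with hc
    have hmp : MeasurePreserving (fun y : Fin d → ℝ => y + c) volume volume :=
      measurePreserving_add_right volume c
    have hemb : MeasurableEmbedding (fun y : Fin d → ℝ => y + c) :=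
      (MeasurableEquiv.addRight c).measurableEmbedding
    have hpre : (fun y : Fin d → ℝ => y + c) ⁻¹' (T k)
        = Set.univ.pi fun _ : Fin d => Set.Ioo (-Real.pi) Real.pi := by
      ext y
      simp only [Set.mem_preimage, hT, Set.mem_pi, Set.mem_univ, forall_true_left,
        Set.mem_Ioo, Pi.add_apply, hc]
      constructor
      · intro h i; have := h i; constructor <;> linarith [(this).1, (this).2]
      · intro h i; have := h i; constructor <;> linarith [(this).1, (this).2]
    rw [← hpre, hmp.setIntegral_preimage_emb hemb]
  simp_rw [step1]
  have hdisj : Set.Pairwise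
      (↑(Fintype.piFinset (fun _ : Fin d => Finset.Icc (-(N:ℤ)) N))) (Function.onFun Disjoint T) := by
    intro k _ l _ hkl
    rw [Function.onFun, Set.disjoint_left]
    intro x hxk hxl
    apply hkl
    funext i
    have h1 := hxk i trivial
    have h2 := hxl i trivial
    simp only [Set.mem_Ioo] at h1 h2
    have hpi := Real.pi_pos
    have : |2 * Real.pi * (k i : ℝ) - 2 * Real.pi * (l i : ℝ)| < 2 * Real.pi := by
      rw [abs_sub_lt_iff]; constructor <;> linarith
    have : |(k i : ℝ) - (l i : ℝ)| < 1 := by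
      rw [show 2 * Real.pi * (k i : ℝ) - 2 * Real.pi * (l i : ℝ)
          = 2 * Real.pi * ((k i : ℝ) - (l i : ℝ)) by ring, abs_mul,
        abs_of_pos (by linarith : (0:ℝ) < 2 * Real.pi)] at this
      nlinarith [abs_nonneg ((k i : ℝ) - (l i : ℝ))]
    have : ((k i - l i : ℤ) : ℝ) = 0 := by
      have h1 : |((k i - l i : ℤ) : ℝ)| < 1 := by push_cast; simpa using this
      rcases eq_or_ne (k i - l i) 0 with h | h
      · exact_mod_cast h
      · exfalso
        have : (1:ℝ) ≤ |((k i - l i : ℤ) : ℝ)| := by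
          rw [← Int.cast_abs]; exact_mod_cast Int.one_le_abs h
        linarith
    have : k i - l i = 0 := by exact_mod_cast this
    omega
  rw [← integral_biUnion_finset _ (fun k _ => hTmeas k) hdisj
    (fun k _ => hf_int.integrableOn)]
  set U : Set (Fin d → ℝ) :=
    ⋃ k ∈ Fintype.piFinset (fun _ : Fin d => Finset.Icc (-(N:ℤ)) N), T k with hU
  have hUmeas : MeasurableSet U :=
    MeasurableSet.biUnion (Finset.countable_toSet _) fun k _ => hTmeas k
  set Z : Set (Fin d → ℝ) :=
    ⋃ i : Fin d, (fun x : Fin d → ℝ => x i) ⁻¹'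
      (Set.range fun mz : ℤ => ((2 * mz + 1 : ℤ) : ℝ) * Real.pi) with hZ
  have hZnull : volume Z = 0 := by
    rw [hZ]
    refine measure_iUnion_null fun i => ?_
    have hD : volume (Set.range fun mz : ℤ => ((2 * mz + 1 : ℤ) : ℝ) * Real.pi) = 0 :=
      (Set.countable_range _).measure_zero _
    exact Measure.pi_eval_preimage_null (μ := fun _ : Fin d => (volume : Measure ℝ)) hD
  have hcover : ∀ x : Fin d → ℝ, x ∉ Z → f x ≠ 0 → x ∈ U := by
    intro x hxZ hxf
    have hbound := hNf x hxf
    have hpi := Real.pi_gt_three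
    set k : Fin d → ℤ := fun i => ⌊x i / (2 * Real.pi) + 1/2⌋ with hk
    have hxT : x ∈ T k := by
      intro i _
      set t : ℝ := x i / (2 * Real.pi) with ht
      have h2pi : (0:ℝ) < 2 * Real.pi := by linarith
      have hfl1 : (k i : ℝ) ≤ t + 1/2 := Int.floor_le _
      have hfl2 : t + 1/2 - 1 < (k i : ℝ) := Int.sub_one_lt_floor _
      have hxi : x i = t * (2 * Real.pi) := by rw [ht, div_mul_cancel₀ _ h2pi.ne']
      have hne : x i ≠ 2 * Real.pi * (k i : ℝ) - Real.pi := by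
        intro hcontra
        apply hxZ
        rw [hZ]
        refine Set.mem_iUnion.mpr ⟨i, ?_⟩
        refine Set.mem_preimage.mpr ⟨k i - 1, ?_⟩
        push_cast
        rw [hcontra]; ring
      constructor
      · rcases lt_or_eq_of_le (by nlinarith : 2 * Real.pi * (k i : ℝ) - Real.pi ≤ x i) with h | h
        · exact h
        · exact absurd h.symm hne
      · nlinarith
    have hkK : k ∈ Fintype.piFinset (fun _ : Fin d => Finset.Icc (-(N:ℤ)) N) := by
      rw [Fintype.mem_piFinset]
      intro i
      rw [Finset.mem_Icc]
      have hcast : |(k i : ℝ)| ≤ N := by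
        have h2pi : (0:ℝ) < 2 * Real.pi := by linarith
        have hfl1 : (k i : ℝ) ≤ x i / (2 * Real.pi) + 1/2 := Int.floor_le _
        have hfl2 : x i / (2 * Real.pi) + 1/2 - 1 < (k i : ℝ) := Int.sub_one_lt_floor _
        have habs : |x i / (2 * Real.pi)| ≤ N / 6 := by
          rw [abs_div, abs_of_pos h2pi]
          rw [div_le_div_iff₀ h2pi (by norm_num)]
          have := hbound i
          nlinarith [abs_nonneg (x i)]
        have hN1' : (1:ℝ) ≤ N := by exact_mod_cast hN1
        rw [abs_le] at habs ⊢
        constructor <;> nlinarith [habs.1, habs.2]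
      rw [← Int.cast_abs] at hcast
      have : |k i| ≤ (N:ℤ) := by exact_mod_cast hcast
      rwa [abs_le] at this
    exact Set.mem_biUnion hkK hxT
  have hcompl : ∫ x in Uᶜ, f x = 0 := by
    have hae : ∀ᵐ x ∂(volume.restrict Uᶜ), f x = 0 := by
      rw [ae_restrict_iff' hUmeas.compl]
      have hsub : {x : Fin d → ℝ | ¬ (x ∈ Uᶜ → f x = 0)} ⊆ Z := by
        intro x hx
        rw [Set.mem_setOf_eq, Classical.not_imp] at hx
        by_contra hxZ
        exact hx.1 (hcover x hxZ hx.2)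
      exact measure_mono_null hsub hZnull
    exact integral_eq_zero_of_ae hae
  have := integral_add_compl hUmeas hf_int
  rw [← this, hcompl, add_zero]

lemma aux_normsq (S : ℂ) : ‖S‖ ^ 2 = (S * (starRingEnd ℂ) S).re := by
  simp [Complex.mul_conj, Complex.normSq_eq_norm_sq, ← Complex.ofReal_pow]

lemma aux_mulconj (z : ℂ) : z * (starRingEnd ℂ) z = ((‖z‖ ^ 2 : ℝ) : ℂ) := by
  rw [Complex.mul_conj]
  norm_cast
  simp [Complex.normSq_eq_norm_sq]

lemma aux_emul (d : ℕ) (θ : Fin d → ℝ) (k l : Fin d → ℤ) :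
    Complex.exp (2 * Real.pi * Complex.I * ((∑ i, θ i * (k i : ℝ) : ℝ) : ℂ)) *
      (starRingEnd ℂ) (Complex.exp (2 * Real.pi * Complex.I * ((∑ i, θ i * (l i : ℝ) : ℝ) : ℂ)))
    = Complex.exp (2 * Real.pi * Complex.I * ((∑ i, θ i * ((k - l) i : ℝ) : ℝ) : ℂ)) := by
  rw [← Complex.exp_conj, ← Complex.exp_add]
  congr 1
  have hsum : (∑ i, θ i * ((k - l) i : ℝ) : ℝ)
      = (∑ i, θ i * (k i : ℝ)) - (∑ i, θ i * (l i : ℝ)) := by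
    rw [← Finset.sum_sub_distrib]
    refine Finset.sum_congr rfl fun i _ => ?_
    rw [Pi.sub_apply]
    push_cast
    ring
  rw [hsum]
  simp only [map_mul, Complex.conj_I, Complex.conj_ofReal, map_ofNat]
  rw [Complex.ofReal_sub]
  ring

end aux

theorem stmt12 (d : ℕ) (hd : 1 ≤ d) (u : (Fin d → ℝ) → ℂ)
    (hu_cont : Continuous u) (hu_supp : HasCompactSupport u) :
    ∫ θ in Set.univ.pi fun _ : Fin d => Set.Ico (0 : ℝ) 1,
      ∫ y in Set.univ.pi fun _ : Fin d => Set.Ioo (-Real.pi) Real.pi,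
        ‖∑' k : Fin d → ℤ,
            Complex.exp (2 * Real.pi * Complex.I * (∑ i : Fin d, θ i * (k i : ℝ) : ℝ)) *
              u (y + fun i => 2 * Real.pi * (k i : ℝ))‖ ^ 2
      = ∫ x : Fin d → ℝ, ‖u x‖ ^ 2 := by
  classical
  have hpi3 := Real.pi_gt_three
  obtain ⟨r, hr⟩ := hu_supp.isBounded.subset_closedBall 0
  set R : ℝ := max r 0 with hRdef
  have hR0 : 0 ≤ R := le_max_right _ _
  have hR : ∀ x, u x ≠ 0 → ‖x‖ ≤ R := by
    intro x hx
    have hx' : x ∈ tsupport u := subset_tsupport u hx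
    have := hr hx'
    rw [Metric.mem_closedBall, dist_zero_right] at this
    exact this.trans (le_max_left _ _)
  set N : ℕ := ⌈R⌉₊ + 1 with hNdef
  have hN1 : 1 ≤ N := by omega
  have hRN : R ≤ N := by
    have h1 := Nat.le_ceil R
    have h2 : ((⌈R⌉₊ : ℝ)) ≤ N := by rw [hNdef]; push_cast; linarith
    linarith
  have hN0 : (0:ℝ) ≤ N := by positivity
  set K := Fintype.piFinset (fun _ : Fin d => Finset.Icc (-(N:ℤ)) N) with hK
  have hYmeas : MeasurableSet (Set.univ.pi fun _ : Fin d => Set.Ioo (-Real.pi) Real.pi) :=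
    MeasurableSet.univ_pi fun _ => measurableSet_Ioo
  have hΘmeas : MeasurableSet (Set.univ.pi fun _ : Fin d => Set.Ico (0:ℝ) 1) :=
    MeasurableSet.univ_pi fun _ => measurableSet_Ico
  have hYint : ∀ g : (Fin d → ℝ) → ℂ, Continuous g →
      IntegrableOn g (Set.univ.pi fun _ : Fin d => Set.Ioo (-Real.pi) Real.pi) := by
    intro g hg
    have hcomp : IsCompact (Set.univ.pi fun _ : Fin d => Set.Icc (-Real.pi) Real.pi) :=
      isCompact_univ_pi fun _ => isCompact_Icc
    exact (hg.continuousOn.integrableOn_compact hcomp).mono_set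
      (Set.pi_mono fun i _ => Set.Ioo_subset_Icc_self)
  have hΘint : ∀ g : (Fin d → ℝ) → ℂ, Continuous g →
      IntegrableOn g (Set.univ.pi fun _ : Fin d => Set.Ico (0:ℝ) 1) := by
    intro g hg
    have hcomp : IsCompact (Set.univ.pi fun _ : Fin d => Set.Icc (0:ℝ) 1) :=
      isCompact_univ_pi fun _ => isCompact_Icc
    exact (hg.continuousOn.integrableOn_compact hcomp).mono_set
      (Set.pi_mono fun i _ => Set.Ico_subset_Icc_self)
  have hcont_e : ∀ m : Fin d → ℤ, Continuous fun θ : Fin d → ℝ =>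
      Complex.exp (2 * Real.pi * Complex.I * ((∑ i, θ i * (m i : ℝ) : ℝ) : ℂ)) := by
    intro m
    exact Complex.continuous_exp.comp (continuous_const.mul
      (Complex.continuous_ofReal.comp
        (continuous_finset_sum _ fun i _ => (continuous_apply i).mul continuous_const)))
  have hcont_shift : ∀ k : Fin d → ℤ,
      Continuous fun y : Fin d → ℝ => u (y + fun i => 2 * Real.pi * (k i : ℝ)) :=
    fun k => hu_cont.comp (continuous_id.add continuous_const)
  have hcont_prod : ∀ k l : Fin d → ℤ,
      Continuous fun y : Fin d → ℝ =>
        u (y + fun i => 2 * Real.pi * (k i : ℝ)) *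
          (starRingEnd ℂ) (u (y + fun i => 2 * Real.pi * (l i : ℝ))) :=
    fun k l => (hcont_shift k).mul ((Complex.continuous_conj).comp (hcont_shift l))
  have hvanish : ∀ y : Fin d → ℝ, (∀ i, |y i| < Real.pi) → ∀ k : Fin d → ℤ, k ∉ K →
      u (y + fun i => 2 * Real.pi * (k i : ℝ)) = 0 := by
    intro y hy k hk
    by_contra hne
    have hnorm := hR _ hne
    rw [hK, Fintype.mem_piFinset] at hk
    push_neg at hk
    obtain ⟨i, hi⟩ := hk
    rw [Finset.mem_Icc] at hi
    have hki : (N:ℝ) + 1 ≤ |(k i : ℝ)| := by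
      have h1 : (N:ℤ) + 1 ≤ |k i| := by rw [le_abs]; omega
      have h2 : ((|k i| : ℤ) : ℝ) = |(k i : ℝ)| := by push_cast; rfl
      rw [← h2]; exact_mod_cast h1
    have hcoord : |(y + fun i => 2 * Real.pi * (k i : ℝ)) i| ≤ R := by
      have h := norm_le_pi_norm (y + fun i => 2 * Real.pi * (k i : ℝ)) i
      rw [Real.norm_eq_abs] at h
      exact h.trans hnorm
    have hcoord' : |y i + 2 * Real.pi * (k i : ℝ)| ≤ R := by simpa using hcoord
    have habs : |2 * Real.pi * (k i : ℝ)| ≤ |y i + 2 * Real.pi * (k i : ℝ)| + |y i| := by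
      calc |2 * Real.pi * (k i : ℝ)|
          = |(y i + 2 * Real.pi * (k i : ℝ)) + (-(y i))| := by ring_nf
        _ ≤ |y i + 2 * Real.pi * (k i : ℝ)| + |(-(y i))| := abs_add_le _ _
        _ = |y i + 2 * Real.pi * (k i : ℝ)| + |y i| := by rw [abs_neg]
    have habs2 : |2 * Real.pi * (k i : ℝ)| = 2 * Real.pi * |(k i : ℝ)| := by
      rw [abs_mul, abs_of_pos (by linarith : (0:ℝ) < 2 * Real.pi)]
    have hyi := hy i
    nlinarith [hyi, hcoord', habs, habs2, hki, hRN, hN0]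
  -- Step A : replace the tsum by a finite sum
  have stepA :
      (∫ θ in Set.univ.pi fun _ : Fin d => Set.Ico (0 : ℝ) 1,
        ∫ y in Set.univ.pi fun _ : Fin d => Set.Ioo (-Real.pi) Real.pi,
          ‖∑' k : Fin d → ℤ,
              Complex.exp (2 * Real.pi * Complex.I * (∑ i : Fin d, θ i * (k i : ℝ) : ℝ)) *
                u (y + fun i => 2 * Real.pi * (k i : ℝ))‖ ^ 2)
      = ∫ θ in Set.univ.pi fun _ : Fin d => Set.Ico (0 : ℝ) 1,
        ∫ y in Set.univ.pi fun _ : Fin d => Set.Ioo (-Real.pi) Real.pi,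
          ‖∑ k ∈ K,
              Complex.exp (2 * Real.pi * Complex.I * (∑ i : Fin d, θ i * (k i : ℝ) : ℝ)) *
                u (y + fun i => 2 * Real.pi * (k i : ℝ))‖ ^ 2 := by
    refine setIntegral_congr_fun hΘmeas fun θ _ => ?_
    refine setIntegral_congr_fun hYmeas fun y hy => ?_
    have hy' : ∀ i, |y i| < Real.pi := by
      intro i
      have := hy i trivial
      rw [Set.mem_Ioo] at this
      rw [abs_lt]; exact ⟨by linarith [this.1], this.2⟩
    rw [tsum_eq_sum fun k hk => by rw [hvanish y hy' k hk, mul_zero]]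
  rw [stepA]
  -- Step B : inner integral equals re of double sum of exp times correlation integrals
  have stepB : ∀ θ : Fin d → ℝ,
      (∫ y in Set.univ.pi fun _ : Fin d => Set.Ioo (-Real.pi) Real.pi,
        ‖∑ k ∈ K,
            Complex.exp (2 * Real.pi * Complex.I * (∑ i : Fin d, θ i * (k i : ℝ) : ℝ)) *
              u (y + fun i => 2 * Real.pi * (k i : ℝ))‖ ^ 2)
      = (∑ k ∈ K, ∑ l ∈ K,
          Complex.exp (2 * Real.pi * Complex.I * ((∑ i, θ i * ((k - l) i : ℝ) : ℝ) : ℂ)) *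
            ∫ y in Set.univ.pi fun _ : Fin d => Set.Ioo (-Real.pi) Real.pi,
              u (y + fun i => 2 * Real.pi * (k i : ℝ)) *
                (starRingEnd ℂ) (u (y + fun i => 2 * Real.pi * (l i : ℝ)))).re := by
    intro θ
    have hpt : ∀ y : Fin d → ℝ,
        ‖∑ k ∈ K,
            Complex.exp (2 * Real.pi * Complex.I * (∑ i : Fin d, θ i * (k i : ℝ) : ℝ)) *
              u (y + fun i => 2 * Real.pi * (k i : ℝ))‖ ^ 2
        = (∑ k ∈ K, ∑ l ∈ K,
            Complex.exp (2 * Real.pi * Complex.I * ((∑ i, θ i * ((k - l) i : ℝ) : ℝ) : ℂ)) *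
              (u (y + fun i => 2 * Real.pi * (k i : ℝ)) *
                (starRingEnd ℂ) (u (y + fun i => 2 * Real.pi * (l i : ℝ))))).re := by
      intro y
      rw [aux_normsq]
      congr 1
      rw [map_sum, Finset.sum_mul_sum]
      refine Finset.sum_congr rfl fun k _ => Finset.sum_congr rfl fun l _ => ?_
      rw [map_mul]
      calc Complex.exp (2 * Real.pi * Complex.I * (∑ i : Fin d, θ i * (k i : ℝ) : ℝ)) *
            u (y + fun i => 2 * Real.pi * (k i : ℝ)) *
            ((starRingEnd ℂ)
                (Complex.exp (2 * Real.pi * Complex.I * (∑ i : Fin d, θ i * (l i : ℝ) : ℝ))) *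
              (starRingEnd ℂ) (u (y + fun i => 2 * Real.pi * (l i : ℝ))))
          = (Complex.exp (2 * Real.pi * Complex.I * (∑ i : Fin d, θ i * (k i : ℝ) : ℝ)) *
              (starRingEnd ℂ)
                (Complex.exp (2 * Real.pi * Complex.I * (∑ i : Fin d, θ i * (l i : ℝ) : ℝ)))) *
            (u (y + fun i => 2 * Real.pi * (k i : ℝ)) *
              (starRingEnd ℂ) (u (y + fun i => 2 * Real.pi * (l i : ℝ)))) := by ring
        _ = _ := by rw [aux_emul]
    rw [setIntegral_congr_fun hYmeas fun y _ => hpt y]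
    have hGcont : Continuous fun y : Fin d → ℝ =>
        ∑ k ∈ K, ∑ l ∈ K,
          Complex.exp (2 * Real.pi * Complex.I * ((∑ i, θ i * ((k - l) i : ℝ) : ℝ) : ℂ)) *
            (u (y + fun i => 2 * Real.pi * (k i : ℝ)) *
              (starRingEnd ℂ) (u (y + fun i => 2 * Real.pi * (l i : ℝ)))) :=
      continuous_finset_sum _ fun k _ => continuous_finset_sum _ fun l _ =>
        continuous_const.mul (hcont_prod k l)
    simp only [← RCLike.re_to_complex]
    rw [integral_re (hYint _ hGcont)]
    congr 1
    rw [integral_finset_sum _ fun k _ => ((hYint _ (continuous_finset_sum _ fun l _ =>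
      (continuous_const.mul (hcont_prod k l) : Continuous fun y => _ * _))))]
    refine Finset.sum_congr rfl fun k _ => ?_
    rw [integral_finset_sum _ fun l _ => (hYint _ (continuous_const.mul (hcont_prod k l) : Continuous fun y => _ * _))]
    refine Finset.sum_congr rfl fun l _ => ?_
    rw [integral_const_mul]
  rw [setIntegral_congr_fun hΘmeas fun θ _ => stepB θ]
  -- Step C : integrate in θ using orthogonality
  have hHcont : Continuous fun θ : Fin d → ℝ =>
      ∑ k ∈ K, ∑ l ∈ K,
        Complex.exp (2 * Real.pi * Complex.I * ((∑ i, θ i * ((k - l) i : ℝ) : ℝ) : ℂ)) *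
          ∫ y in Set.univ.pi fun _ : Fin d => Set.Ioo (-Real.pi) Real.pi,
            u (y + fun i => 2 * Real.pi * (k i : ℝ)) *
              (starRingEnd ℂ) (u (y + fun i => 2 * Real.pi * (l i : ℝ))) :=
    continuous_finset_sum _ fun k _ => continuous_finset_sum _ fun l _ =>
      (hcont_e (k - l)).mul continuous_const
  simp only [← RCLike.re_to_complex]
  rw [integral_re (hΘint _ hHcont)]
  rw [integral_finset_sum _ fun k _ => (hΘint _ (continuous_finset_sum _ fun l _ =>
    ((hcont_e (k - l)).mul continuous_const : Continuous fun θ => _ * _)))]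
  have stepC : ∀ k ∈ K,
      (∫ θ in Set.univ.pi fun _ : Fin d => Set.Ico (0:ℝ) 1,
        ∑ l ∈ K,
          Complex.exp (2 * Real.pi * Complex.I * ((∑ i, θ i * ((k - l) i : ℝ) : ℝ) : ℂ)) *
            ∫ y in Set.univ.pi fun _ : Fin d => Set.Ioo (-Real.pi) Real.pi,
              u (y + fun i => 2 * Real.pi * (k i : ℝ)) *
                (starRingEnd ℂ) (u (y + fun i => 2 * Real.pi * (l i : ℝ))))
      = ∫ y in Set.univ.pi fun _ : Fin d => Set.Ioo (-Real.pi) Real.pi,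
          u (y + fun i => 2 * Real.pi * (k i : ℝ)) *
            (starRingEnd ℂ) (u (y + fun i => 2 * Real.pi * (k i : ℝ))) := by
    intro k hkK
    rw [integral_finset_sum _ fun l _ => (hΘint _ ((hcont_e (k - l)).mul continuous_const : Continuous fun θ => _ * _))]
    have hterm : ∀ l ∈ K,
        (∫ θ in Set.univ.pi fun _ : Fin d => Set.Ico (0:ℝ) 1,
          Complex.exp (2 * Real.pi * Complex.I * ((∑ i, θ i * ((k - l) i : ℝ) : ℝ) : ℂ)) *
            ∫ y in Set.univ.pi fun _ : Fin d => Set.Ioo (-Real.pi) Real.pi,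
              u (y + fun i => 2 * Real.pi * (k i : ℝ)) *
                (starRingEnd ℂ) (u (y + fun i => 2 * Real.pi * (l i : ℝ))))
        = if l = k then
            (∫ y in Set.univ.pi fun _ : Fin d => Set.Ioo (-Real.pi) Real.pi,
              u (y + fun i => 2 * Real.pi * (k i : ℝ)) *
                (starRingEnd ℂ) (u (y + fun i => 2 * Real.pi * (l i : ℝ))))
          else 0 := by
      intro l _
      rw [integral_mul_const, aux_orth d (k - l)]
      by_cases hlk : l = k
      · rw [if_pos (show k - l = 0 by rw [hlk, sub_self]), one_mul, if_pos hlk]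
      · rw [if_neg (fun hc => hlk (sub_eq_zero.mp hc).symm), zero_mul, if_neg hlk]
    rw [Finset.sum_congr rfl hterm, Finset.sum_ite_eq' K k _, if_pos hkK]
  rw [Finset.sum_congr rfl stepC]
  -- Step D : diagonal terms are real
  have stepD : ∀ k ∈ K,
      (∫ y in Set.univ.pi fun _ : Fin d => Set.Ioo (-Real.pi) Real.pi,
        u (y + fun i => 2 * Real.pi * (k i : ℝ)) *
          (starRingEnd ℂ) (u (y + fun i => 2 * Real.pi * (k i : ℝ))))
      = ((∫ y in Set.univ.pi fun _ : Fin d => Set.Ioo (-Real.pi) Real.pi,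
          ‖u (y + fun i => 2 * Real.pi * (k i : ℝ))‖ ^ 2 : ℝ) : ℂ) := by
    intro k _
    rw [setIntegral_congr_fun hYmeas fun y _ =>
      aux_mulconj (u (y + fun i => 2 * Real.pi * (k i : ℝ)))]
    exact integral_ofReal
  rw [Finset.sum_congr rfl stepD, ← Complex.ofReal_sum]
  simp only [RCLike.re_to_complex, Complex.ofReal_re]
  -- Step E : tiling
  rw [hK]
  exact aux_tiling d (fun x => ‖u x‖ ^ 2) (hu_cont.norm.pow 2)
    (hu_supp.comp_left (g := fun z : ℂ => ‖z‖ ^ 2) (by simp)) N hN1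
    (by
      intro x hx i
      have hux : u x ≠ 0 := by intro h; apply hx; simp [h]
      have h1 := norm_le_pi_norm x i
      rw [Real.norm_eq_abs] at h1
      exact h1.trans ((hR x hux).trans hRN))
end
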